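/- arXiv:1508.03448 — 3 statements merged into one kernel-verified Lean document; each statement's English description precedes it below -/
import Mathlib

section
/- Let M ∈ ℝ^{n×n} be symmetric positive definite, let γ > 0, and let {1,…,n} = B ∪ C be a partition into two disjoint index sets. Let G ∈ ℝ^{n×n} be the matrix with blocks G_{B,B} = γ·M_{B,B}, G_{B,C} = γ·M_{B,C}, G_{C,B} = 0 and G_{C,C} = I (identity). Then G is invertible and its inverse satisfies, in the spectral norm ‖·‖₂, the bounds ‖G⁻¹‖₂ ≤ ‖(M_{B,B})⁻¹‖₂·(1/γ + ‖M_{B,C}‖₂) + 1 ≤ ‖M⁻¹‖₂·(1/γ + ‖M‖₂) + 1. -/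
open scoped Matrix.Norms.L2Operator
open Matrix Finset Function

set_option linter.unusedSectionVars false
set_option maxHeartbeats 1000000

variable {m l κ ι : Type*} [Fintype m] [Fintype l] [DecidableEq m] [DecidableEq l]
  [Fintype κ] [Fintype ι] [DecidableEq κ] [DecidableEq ι]

lemma euc_norm_sq (x : EuclideanSpace ℝ m) : ‖x‖^2 = ∑ i, x i ^ 2 := by
  rw [EuclideanSpace.norm_eq, Real.sq_sqrt (by positivity)]
  simp [Real.norm_eq_abs, sq_abs]

lemma le_of_sq_le_sq' {a b : ℝ} (ha : 0 ≤ a) (hb : 0 ≤ b) (h : a^2 ≤ b^2) : a ≤ b := by nlinarith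

lemma opnorm_le_of_sq (A : Matrix m l ℝ) {c : ℝ} (hc : 0 ≤ c)
    (h : ∀ x : l → ℝ, ∑ i, ((A *ᵥ x) i)^2 ≤ c^2 * ∑ j, (x j)^2) : ‖A‖ ≤ c := by
  rw [Matrix.l2_opNorm_def]
  apply ContinuousLinearMap.opNorm_le_bound _ hc
  intro x
  have hx : ((Matrix.toEuclideanLin (𝕜 := ℝ) (m := m) (n := l)).trans
      LinearMap.toContinuousLinearMap A) x = (EuclideanSpace.equiv m ℝ).symm (A *ᵥ x) := rfl
  rw [hx]
  apply le_of_sq_le_sq' (norm_nonneg _) (by positivity)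
  rw [mul_pow, euc_norm_sq, euc_norm_sq]
  exact h x

lemma sq_mulVec_le (A : Matrix m l ℝ) (x : l → ℝ) :
    ∑ i, ((A *ᵥ x) i)^2 ≤ ‖A‖^2 * ∑ j, (x j)^2 := by
  have := Matrix.l2_opNorm_mulVec A ((EuclideanSpace.equiv l ℝ).symm x)
  have h2 : ∀ a b : ℝ, 0 ≤ a → 0 ≤ b → a ≤ b → a^2 ≤ b^2 := by intros; nlinarith
  calc ∑ i, ((A *ᵥ x) i)^2
      = ‖(EuclideanSpace.equiv m ℝ).symm (A *ᵥ x)‖^2 := (euc_norm_sq ((EuclideanSpace.equiv m ℝ).symm (A *ᵥ x))).symm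
    _ ≤ (‖A‖ * ‖(EuclideanSpace.equiv l ℝ).symm x‖)^2 := by
        apply h2 _ _ (norm_nonneg _) (by positivity)
        exact this
    _ = ‖A‖^2 * ∑ j, (x j)^2 := by rw [mul_pow, euc_norm_sq]; rfl


/-- zero-extension of a vector along an injective map -/
noncomputable def extv (g : κ → m) (x : κ → ℝ) : m → ℝ :=
  fun j => ∑ k, if j = g k then x k else 0

lemma extv_apply (g : κ → m) (hg : Injective g) (x : κ → ℝ) (k : κ) :
    extv g x (g k) = x k := by
  unfold extv
  rw [Finset.sum_eq_single k]
  · simp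
  · intro b _ hb
    rw [if_neg]
    intro h; exact hb (hg h.symm)
  · simp

lemma extv_eq_zero (g : κ → m) (x : κ → ℝ) {j : m} (hj : ∀ k, j ≠ g k) :
    extv g x j = 0 := by
  unfold extv; rw [Finset.sum_eq_zero]; intro k _; rw [if_neg (hj k)]

lemma sum_sq_extv (g : κ → m) (hg : Injective g) (x : κ → ℝ) :
    ∑ j, (extv g x j)^2 = ∑ k, (x k)^2 := by
  rw [← Finset.sum_subset (Finset.subset_univ (Finset.univ.image g))]
  · rw [Finset.sum_image (fun a _ b _ h => hg h)]
    exact Finset.sum_congr rfl fun k _ => by rw [extv_apply g hg]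
  · intro j _ hj
    have : ∀ k, j ≠ g k := by
      intro k hk; exact hj (Finset.mem_image.mpr ⟨k, Finset.mem_univ _, hk.symm⟩)
    rw [extv_eq_zero g x this]; ring

lemma mulVec_extv (A : Matrix m m ℝ) (g : κ → m) (x : κ → ℝ) (i : m) :
    (A *ᵥ extv g x) i = ∑ k, A i (g k) * x k := by
  unfold extv Matrix.mulVec dotProduct
  simp only [Finset.mul_sum, mul_ite, mul_zero]
  rw [Finset.sum_comm]
  refine Finset.sum_congr rfl fun k _ => ?_
  rw [Finset.sum_eq_single (g k)]
  · simp
  · intro b _ hb; rw [if_neg hb]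
  · simp

lemma dot_extv (g : κ → m) (x : κ → ℝ) (y : m → ℝ) (hg : Injective g) :
    dotProduct (extv g x) y = ∑ k, x k * y (g k) := by
  unfold dotProduct
  rw [← Finset.sum_subset (Finset.subset_univ (Finset.univ.image g))]
  · rw [Finset.sum_image (fun a _ b _ h => hg h)]
    exact Finset.sum_congr rfl fun k _ => by rw [extv_apply g hg]
  · intro j _ hj
    have : ∀ k, j ≠ g k := by
      intro k hk; exact hj (Finset.mem_image.mpr ⟨k, Finset.mem_univ _, hk.symm⟩)
    rw [extv_eq_zero g x this]; ring


lemma norm_submatrix_le (A : Matrix m m ℝ) (f : ι → m) (g : κ → m)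
    (hf : Injective f) (hg : Injective g) : ‖A.submatrix f g‖ ≤ ‖A‖ := by
  apply opnorm_le_of_sq _ (norm_nonneg A)
  intro x
  have key : ∀ i, (A.submatrix f g *ᵥ x) i = (A *ᵥ extv g x) (f i) := by
    intro i
    rw [mulVec_extv]
    simp [Matrix.mulVec, dotProduct, Matrix.submatrix_apply]
  calc ∑ i, ((A.submatrix f g *ᵥ x) i)^2
      = ∑ i, ((A *ᵥ extv g x) (f i))^2 := by simp_rw [key]
    _ ≤ ∑ j, ((A *ᵥ extv g x) j)^2 := by
        have himg : ∑ j ∈ Finset.univ.image f, ((A *ᵥ extv g x) j)^2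
            = ∑ i : ι, ((A *ᵥ extv g x) (f i))^2 :=
          Finset.sum_image (fun a _ b _ h => hf h)
        rw [← himg]
        exact Finset.sum_le_univ_sum_of_nonneg (fun j => sq_nonneg _)
    _ ≤ ‖A‖^2 * ∑ j, (extv g x j)^2 := sq_mulVec_le A _
    _ = ‖A‖^2 * ∑ k, (x k)^2 := by rw [sum_sq_extv g hg]

lemma psd_cauchy_schwarz {A : Matrix m m ℝ} (hA : A.PosSemidef) (x y : m → ℝ) :
    (x ⬝ᵥ (A *ᵥ y))^2 ≤ (x ⬝ᵥ (A *ᵥ x)) * (y ⬝ᵥ (A *ᵥ y)) := by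
  have hsymm : ∀ u v : m → ℝ, u ⬝ᵥ (A *ᵥ v) = v ⬝ᵥ (A *ᵥ u) := by
    intro u v
    have hAT : Aᵀ = A := by
      have h1 := hA.1
      rw [Matrix.IsHermitian] at h1
      exact (Matrix.conjTranspose_eq_transpose_of_trivial A).symm.trans h1
    rw [Matrix.dotProduct_mulVec, ← Matrix.mulVec_transpose, hAT, dotProduct_comm]
  have hpos : ∀ z : m → ℝ, 0 ≤ z ⬝ᵥ (A *ᵥ z) := by
    intro z; simpa using hA.dotProduct_mulVec_nonneg z
  have hq : ∀ t : ℝ, 0 ≤ (y ⬝ᵥ (A *ᵥ y)) * (t*t) + (2 * (x ⬝ᵥ (A *ᵥ y))) * t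
      + (x ⬝ᵥ (A *ᵥ x)) := by
    intro t
    have h0 := hpos (x + t • y)
    have expand : (x + t • y) ⬝ᵥ (A *ᵥ (x + t • y)) =
        (y ⬝ᵥ (A *ᵥ y)) * (t*t) + (2 * (x ⬝ᵥ (A *ᵥ y))) * t + (x ⬝ᵥ (A *ᵥ x)) := by
      rw [Matrix.mulVec_add, Matrix.mulVec_smul, add_dotProduct,
        smul_dotProduct, dotProduct_add, dotProduct_add,
        dotProduct_smul, dotProduct_smul, hsymm y x]
      simp [smul_eq_mul]; ring
    linarith [expand ▸ h0]
  have := discrim_le_zero hq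
  rw [discrim] at this
  nlinarith [this]

lemma coercive {M : Matrix m m ℝ} (hM : M.PosDef) (x : m → ℝ) :
    ∑ j, (x j)^2 ≤ ‖M⁻¹‖ * (x ⬝ᵥ (M *ᵥ x)) := by
  have hMinv : (M⁻¹).PosDef := hM.inv
  have hdet : IsUnit M.det := hM.det_pos.ne'.isUnit
  set S := ∑ j, (x j)^2 with hS
  have hS0 : 0 ≤ S := Finset.sum_nonneg fun j _ => sq_nonneg _
  have hxx : x ⬝ᵥ x = S := by simp [dotProduct, hS, sq]
  have hMM : M⁻¹ *ᵥ (M *ᵥ x) = x := by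
    rw [Matrix.mulVec_mulVec, Matrix.nonsing_inv_mul M hdet, Matrix.one_mulVec]
  have cs := psd_cauchy_schwarz hMinv.posSemidef x (M *ᵥ x)
  rw [hMM, hxx] at cs
  -- cs : S^2 ≤ (x ⬝ᵥ M⁻¹ *ᵥ x) * ((M *ᵥ x) ⬝ᵥ x)
  have hcomm : (M *ᵥ x) ⬝ᵥ x = x ⬝ᵥ (M *ᵥ x) := dotProduct_comm _ _
  rw [hcomm] at cs
  -- bound the first factor
  have h1 : x ⬝ᵥ (M⁻¹ *ᵥ x) ≤ ‖M⁻¹‖ * S := by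
    have csd := Finset.sum_mul_sq_le_sq_mul_sq Finset.univ x (fun j => (M⁻¹ *ᵥ x) j)
    have hsq := sq_mulVec_le M⁻¹ x
    have hnn : (0:ℝ) ≤ ‖M⁻¹‖ * S := mul_nonneg (norm_nonneg _) hS0
    have hdp : x ⬝ᵥ (M⁻¹ *ᵥ x) = ∑ j, x j * (M⁻¹ *ᵥ x) j := rfl
    have hdnn : 0 ≤ x ⬝ᵥ (M⁻¹ *ᵥ x) := by simpa using hMinv.posSemidef.dotProduct_mulVec_nonneg x
    apply le_of_sq_le_sq' hdnn hnn
    rw [hdp]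
    calc (∑ j, x j * (M⁻¹ *ᵥ x) j)^2 ≤ S * ∑ j, ((M⁻¹ *ᵥ x) j)^2 := csd
      _ ≤ S * (‖M⁻¹‖^2 * S) := by
          exact mul_le_mul_of_nonneg_left hsq hS0
      _ = (‖M⁻¹‖ * S)^2 := by ring
  have hpos : 0 ≤ x ⬝ᵥ (M *ᵥ x) := by simpa using hM.posSemidef.dotProduct_mulVec_nonneg x
  rcases eq_or_lt_of_le hS0 with h0 | h0
  · rw [← h0]; positivity
  · nlinarith [cs, h1, hpos, h0]

lemma norm_inv_le_of_coercive {A : Matrix m m ℝ} (hA : A.PosDef) {d : ℝ} (hd : 0 ≤ d)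
    (h : ∀ x : m → ℝ, ∑ j, (x j)^2 ≤ d * (x ⬝ᵥ (A *ᵥ x))) : ‖A⁻¹‖ ≤ d := by
  have hdet : IsUnit A.det := hA.det_pos.ne'.isUnit
  apply opnorm_le_of_sq _ hd
  intro y
  set x := A⁻¹ *ᵥ y with hx
  have hAx : A *ᵥ x = y := by
    rw [hx, Matrix.mulVec_mulVec, Matrix.mul_nonsing_inv A hdet, Matrix.one_mulVec]
  set S := ∑ j, (x j)^2 with hS
  set T := ∑ j, (y j)^2 with hT
  have hS0 : 0 ≤ S := Finset.sum_nonneg fun j _ => sq_nonneg _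
  have hT0 : 0 ≤ T := Finset.sum_nonneg fun j _ => sq_nonneg _
  have h1 : S ≤ d * (x ⬝ᵥ y) := by have := h x; rwa [hAx] at this
  have cs : (x ⬝ᵥ y)^2 ≤ S * T := Finset.sum_mul_sq_le_sq_mul_sq Finset.univ x y
  rcases eq_or_lt_of_le hS0 with h0 | h0
  · rw [← h0]; positivity
  · nlinarith [h1, cs, h0, hd]

variable {a b a' b' : Type*} [Fintype a] [Fintype b] [Fintype a'] [Fintype b']
  [DecidableEq a] [DecidableEq b] [DecidableEq a'] [DecidableEq b']

lemma norm_submatrix_equiv (A : Matrix m m ℝ) (e : ι ≃ m) : ‖A.submatrix e e‖ = ‖A‖ := by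
  refine le_antisymm (norm_submatrix_le A e e e.injective e.injective) ?_
  have h : (A.submatrix e e).submatrix e.symm e.symm = A := by
    rw [Matrix.submatrix_submatrix]
    simp [Equiv.self_comp_symm]
  calc ‖A‖ = ‖(A.submatrix e e).submatrix e.symm e.symm‖ := by rw [h]
    _ ≤ ‖A.submatrix e e‖ :=
        norm_submatrix_le _ e.symm e.symm e.symm.injective e.symm.injective

lemma sum_decomp (x : (a ⊕ b) → ℝ) :
    x = Sum.elim (x ∘ Sum.inl) (x ∘ Sum.inr) := by funext s; cases s <;> rfl

lemma sum_sq_sum_le₁ (x : (a ⊕ b) → ℝ) :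
    ∑ i, (x (Sum.inl i))^2 ≤ ∑ s, (x s)^2 := by
  rw [Fintype.sum_sum_type]
  have : 0 ≤ ∑ i : b, (x (Sum.inr i))^2 := Finset.sum_nonneg fun _ _ => sq_nonneg _
  linarith

lemma sum_sq_sum_le₂ (x : (a ⊕ b) → ℝ) :
    ∑ i, (x (Sum.inr i))^2 ≤ ∑ s, (x s)^2 := by
  rw [Fintype.sum_sum_type]
  have : 0 ≤ ∑ i : a, (x (Sum.inl i))^2 := Finset.sum_nonneg fun _ _ => sq_nonneg _
  linarith

lemma norm_fb_ul (X : Matrix a a' ℝ) :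
    ‖Matrix.fromBlocks X 0 0 (0 : Matrix b b' ℝ)‖ ≤ ‖X‖ := by
  apply opnorm_le_of_sq _ (norm_nonneg X)
  intro x
  rw [sum_decomp x, Matrix.fromBlocks_mulVec]
  simp only [Matrix.zero_mulVec, add_zero, zero_add, Fintype.sum_sum_type,
    Sum.elim_inl, Sum.elim_inr]
  calc (∑ i : a, ((X *ᵥ (x ∘ Sum.inl)) i)^2) + ∑ i : b, ((0:ℝ))^2
      ≤ ‖X‖^2 * ∑ j, ((x ∘ Sum.inl) j)^2 := by
        simpa using sq_mulVec_le X (x ∘ Sum.inl)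
    _ ≤ ‖X‖^2 * (∑ j : a', ((x ∘ Sum.inl) j)^2 + ∑ j : b', ((x ∘ Sum.inr) j)^2) := by
        apply mul_le_mul_of_nonneg_left _ (sq_nonneg _)
        have h2 : 0 ≤ ∑ j : b', ((x ∘ Sum.inr) j)^2 :=
          Finset.sum_nonneg fun _ _ => sq_nonneg _
        linarith

lemma norm_fb_ur (Y : Matrix a b' ℝ) :
    ‖Matrix.fromBlocks (0 : Matrix a a' ℝ) Y 0 (0 : Matrix b b' ℝ)‖ ≤ ‖Y‖ := by
  apply opnorm_le_of_sq _ (norm_nonneg Y)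
  intro x
  rw [sum_decomp x, Matrix.fromBlocks_mulVec]
  simp only [Matrix.zero_mulVec, add_zero, zero_add, Fintype.sum_sum_type,
    Sum.elim_inl, Sum.elim_inr]
  calc (∑ i : a, ((Y *ᵥ (x ∘ Sum.inr)) i)^2) + ∑ i : b, ((0:ℝ))^2
      ≤ ‖Y‖^2 * ∑ j, ((x ∘ Sum.inr) j)^2 := by
        simpa using sq_mulVec_le Y (x ∘ Sum.inr)
    _ ≤ ‖Y‖^2 * (∑ j : a', ((x ∘ Sum.inl) j)^2 + ∑ j : b', ((x ∘ Sum.inr) j)^2) := by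
        apply mul_le_mul_of_nonneg_left _ (sq_nonneg _)
        have h2 : 0 ≤ ∑ j : a', ((x ∘ Sum.inl) j)^2 :=
          Finset.sum_nonneg fun _ _ => sq_nonneg _
        linarith

lemma norm_fb_lr_one (a a' b' : Type*) [Fintype a] [Fintype a'] [Fintype b']
    [DecidableEq a] [DecidableEq a'] [DecidableEq b'] :
    ‖Matrix.fromBlocks (0 : Matrix a a' ℝ) (0 : Matrix a b' ℝ) 0 (1 : Matrix b' b' ℝ)‖
      ≤ 1 := by
  apply opnorm_le_of_sq _ zero_le_one
  intro x
  rw [sum_decomp x, Matrix.fromBlocks_mulVec]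
  simp only [Matrix.zero_mulVec, add_zero, zero_add, Fintype.sum_sum_type,
    Sum.elim_inl, Sum.elim_inr, Matrix.one_mulVec]
  have h1 : 0 ≤ ∑ j : a', (x (Sum.inl j))^2 :=
    Finset.sum_nonneg fun _ _ => sq_nonneg _
  simp only [Pi.zero_apply, Sum.elim_comp_inr, Function.comp_apply, Sum.elim_inr]
  have h0 : (∑ _i : a, ((0:ℝ))^2) = 0 := by simp
  rw [h0]
  nlinarith [h1]

/-- the generalized derivative `G`, with blocks
`G_{B,B} = γM_{B,B}`, `G_{B,C} = γM_{B,C}`, `G_{C,B} = 0`, `G_{C,C} = I`, is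
invertible, and its inverse satisfies the stated bounds in the spectral norm. -/
theorem stmt14 {n : ℕ} (γ : ℝ) (hγ : 0 < γ)
    (M : Matrix (Fin n) (Fin n) ℝ) (hMsymm : M.IsSymm) (hM : M.PosDef)
    (B C : Finset (Fin n)) (hdisj : Disjoint B C) (hunion : B ∪ C = Finset.univ)
    (G : Matrix (Fin n) (Fin n) ℝ)
    (hG : ∀ i j, G i j =
      if i ∈ B then γ * M i j else (if i = j then 1 else 0)) :
    IsUnit G ∧
    ‖G⁻¹‖ ≤
      ‖(M.submatrix (fun i : {x // x ∈ B} => (i : Fin n))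
          (fun j : {x // x ∈ B} => (j : Fin n)))⁻¹‖ *
        (1 / γ + ‖M.submatrix (fun i : {x // x ∈ B} => (i : Fin n))
          (fun j : {x // x ∈ C} => (j : Fin n))‖) + 1 ∧
    ‖(M.submatrix (fun i : {x // x ∈ B} => (i : Fin n))
        (fun j : {x // x ∈ B} => (j : Fin n)))⁻¹‖ *
      (1 / γ + ‖M.submatrix (fun i : {x // x ∈ B} => (i : Fin n))
        (fun j : {x // x ∈ C} => (j : Fin n))‖) + 1 ≤
      ‖M⁻¹‖ * (1 / γ + ‖M‖) + 1 := by
  classical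
  set cB : {x // x ∈ B} → Fin n := fun i => (i : Fin n) with hcB
  set cC : {x // x ∈ C} → Fin n := fun j => (j : Fin n) with hcC
  have injB : Function.Injective cB := fun a b h => Subtype.ext h
  have injC : Function.Injective cC := fun a b h => Subtype.ext h
  have hBC : ∀ i : Fin n, i ∈ B ∨ i ∈ C := fun i =>
    Finset.mem_union.mp (hunion ▸ Finset.mem_univ i)
  have hnB : ∀ i : Fin n, i ∈ C → i ∉ B := fun i hc hb =>
    (Finset.disjoint_left.mp hdisj hb) hc
  set MBB := M.submatrix cB cB with hMBBdef
  set MBC := M.submatrix cB cC with hMBCdef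
  -- key quadratic form identity
  have key : ∀ x : {x // x ∈ B} → ℝ,
      x ⬝ᵥ (MBB *ᵥ x) = (extv cB x) ⬝ᵥ (M *ᵥ (extv cB x)) := by
    intro x
    rw [dot_extv cB x _ injB]
    refine Finset.sum_congr rfl fun k _ => ?_
    rw [mulVec_extv M cB x (cB k)]
    simp [Matrix.mulVec, dotProduct, hMBBdef, Matrix.submatrix_apply]
  -- MBB is positive definite
  have hMBB : MBB.PosDef := by
    refine Matrix.PosDef.of_dotProduct_mulVec_pos ?_ ?_
    · show MBBᴴ = MBB
      rw [hMBBdef, Matrix.conjTranspose_submatrix, hM.1]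
    · intro x hx
      obtain ⟨k, hk⟩ := Function.ne_iff.mp hx
      have hne : extv cB x ≠ 0 := by
        intro h0
        apply hk
        have := congrFun h0 (cB k)
        rwa [extv_apply cB injB x k] at this
      have := hM.dotProduct_mulVec_pos hne
      have hsimp : star (extv cB x) = extv cB x := by simp
      rw [hsimp] at this
      have hstar : star x = x := by simp
      rw [hstar, key x]
      exact this
  have hdetBB : IsUnit MBB.det := hMBB.det_pos.ne'.isUnit
  haveI : Invertible MBB := MBB.invertibleOfIsUnitDet hdetBB
  haveI : Invertible γ := hγ.ne'.isUnit.invertible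
  haveI : Invertible (γ • MBB) := by
    apply Matrix.invertibleOfIsUnitDet
    rw [Matrix.det_smul]
    exact (IsUnit.pow _ hγ.ne'.isUnit).mul hdetBB
  -- the sum equivalence
  have hbij : Function.Bijective
      (Sum.elim (fun i : {x // x ∈ B} => (i : Fin n))
        (fun i : {x // x ∈ C} => (i : Fin n))) := by
    constructor
    · rintro (⟨i, hi⟩ | ⟨i, hi⟩) (⟨j, hj⟩ | ⟨j, hj⟩) h <;>
        simp only [Sum.elim_inl, Sum.elim_inr] at h
      · exact congrArg Sum.inl (Subtype.ext h)
      · exact absurd hi (h ▸ hnB j hj)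
      · exact absurd hj (h ▸ hnB i hi)
      · exact congrArg Sum.inr (Subtype.ext h)
    · intro i
      rcases hBC i with h | h
      · exact ⟨Sum.inl ⟨i, h⟩, rfl⟩
      · exact ⟨Sum.inr ⟨i, h⟩, rfl⟩
  set e := Equiv.ofBijective _ hbij with he
  set X := ⅟(γ • MBB) with hXdef
  set F := Matrix.fromBlocks (γ • MBB) (γ • MBC) 0 (1 : Matrix {x // x ∈ C} {x // x ∈ C} ℝ)
    with hF
  set K := Matrix.fromBlocks X (-(X * (γ • MBC))) 0 (1 : Matrix {x // x ∈ C} {x // x ∈ C} ℝ)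
    with hK
  have hFK : F * K = 1 := by
    rw [hF, hK, Matrix.fromBlocks_multiply]
    rw [show (γ • MBB) * (-(X * (γ • MBC))) = -(((γ • MBB) * X) * (γ • MBC)) by
      rw [Matrix.mul_neg, Matrix.mul_assoc]]
    rw [hXdef, mul_invOf_self]
    simp [Matrix.fromBlocks_one]
  have hGF : G = F.submatrix e.symm e.symm := by
    ext i j
    obtain ⟨s, rfl⟩ := e.surjective i
    obtain ⟨t, rfl⟩ := e.surjective j
    rw [Matrix.submatrix_apply, Equiv.symm_apply_apply, Equiv.symm_apply_apply]
    rcases s with a | a <;> rcases t with b | b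
    · have h1 : e (Sum.inl a) = (a : Fin n) := rfl
      have h2 : e (Sum.inl b) = (b : Fin n) := rfl
      rw [h1, h2, hG, if_pos a.2]
      simp [hF, hMBBdef, Matrix.smul_apply, smul_eq_mul, hcB]
    · have h1 : e (Sum.inl a) = (a : Fin n) := rfl
      have h2 : e (Sum.inr b) = (b : Fin n) := rfl
      rw [h1, h2, hG, if_pos a.2]
      simp [hF, hMBCdef, Matrix.smul_apply, smul_eq_mul, hcB, hcC]
    · have h1 : e (Sum.inr a) = (a : Fin n) := rfl
      have h2 : e (Sum.inl b) = (b : Fin n) := rfl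
      rw [h1, h2, hG, if_neg (hnB _ a.2),
        if_neg (fun hab => (hnB _ a.2) (by rw [hab]; exact b.2))]
      simp [hF]
    · have h1 : e (Sum.inr a) = (a : Fin n) := rfl
      have h2 : e (Sum.inr b) = (b : Fin n) := rfl
      rw [h1, h2, hG, if_neg (hnB _ a.2)]
      simp only [hF, Matrix.fromBlocks_apply₂₂, Matrix.one_apply]
      by_cases hab : a = b
      · rw [if_pos (congrArg _ hab), if_pos hab]
      · rw [if_neg (fun h => hab (Subtype.ext h)), if_neg hab]
  set H := K.submatrix (e.symm : Fin n ≃ _) (e.symm : Fin n ≃ _) with hH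
  have hGH : G * H = 1 := by
    rw [hGF, hH, Matrix.submatrix_mul_equiv, hFK, Matrix.submatrix_one_equiv]
  have hHG : H * G = 1 := mul_eq_one_comm.mp hGH
  have hUnit : IsUnit G := ⟨⟨G, H, hGH, hHG⟩, rfl⟩
  have hGinv : G⁻¹ = H := Matrix.inv_eq_right_inv hGH
  refine ⟨hUnit, ?_, ?_⟩
  · -- first norm bound
    rw [hGinv, hH, norm_submatrix_equiv K e.symm]
    have hsm : (γ • MBB)⁻¹ = ⅟γ • MBB⁻¹ := MBB.inv_smul γ hdetBB
    have hXeq : X = γ⁻¹ • MBB⁻¹ := by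
      rw [hXdef, invOf_eq_nonsing_inv, hsm, invOf_eq_inv]
    have hXn : ‖X‖ = (1/γ) * ‖MBB⁻¹‖ := by
      rw [hXeq, norm_smul, Real.norm_eq_abs, abs_inv, abs_of_pos hγ, one_div]
    have hY : X * (γ • MBC) = MBB⁻¹ * MBC := by
      rw [hXeq, Matrix.smul_mul, Matrix.mul_smul, smul_smul,
        inv_mul_cancel₀ hγ.ne', one_smul]
    have hdecomp : K =
        Matrix.fromBlocks X 0 0 0 +
        Matrix.fromBlocks 0 (-(MBB⁻¹ * MBC)) 0 0 +
        Matrix.fromBlocks 0 0 0 (1 : Matrix {x // x ∈ C} {x // x ∈ C} ℝ) := by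
      rw [hK, hY, Matrix.fromBlocks_add, Matrix.fromBlocks_add]
      simp
    rw [hdecomp]
    calc ‖Matrix.fromBlocks X 0 0 0 +
          Matrix.fromBlocks 0 (-(MBB⁻¹ * MBC)) 0 0 +
          Matrix.fromBlocks 0 0 0 (1 : Matrix {x // x ∈ C} {x // x ∈ C} ℝ)‖
        ≤ ‖Matrix.fromBlocks X 0 0 0‖ +
          ‖Matrix.fromBlocks 0 (-(MBB⁻¹ * MBC)) 0 0‖ +
          ‖Matrix.fromBlocks 0 0 0 (1 : Matrix {x // x ∈ C} {x // x ∈ C} ℝ)‖ :=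
          le_trans (norm_add_le _ _) (by gcongr; exact norm_add_le _ _)
      _ ≤ (1/γ) * ‖MBB⁻¹‖ + ‖MBB⁻¹‖ * ‖MBC‖ + 1 := by
          have b1 : ‖Matrix.fromBlocks X 0 0 (0 : Matrix {x // x ∈ C} {x // x ∈ C} ℝ)‖
              ≤ (1/γ) * ‖MBB⁻¹‖ := hXn ▸ norm_fb_ul X
          have b2 : ‖Matrix.fromBlocks (0 : Matrix {x // x ∈ B} {x // x ∈ B} ℝ)
              (-(MBB⁻¹ * MBC)) 0 (0 : Matrix {x // x ∈ C} {x // x ∈ C} ℝ)‖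
              ≤ ‖MBB⁻¹‖ * ‖MBC‖ := by
            refine le_trans (norm_fb_ur _) ?_
            rw [norm_neg]
            exact Matrix.l2_opNorm_mul _ _
          have b3 := norm_fb_lr_one {x // x ∈ B} {x // x ∈ B} {x // x ∈ C}
          exact add_le_add (add_le_add b1 b2) b3
      _ = ‖MBB⁻¹‖ * (1/γ + ‖MBC‖) + 1 := by ring
  · -- second inequality
    have h2 : ‖MBC‖ ≤ ‖M‖ := norm_submatrix_le M cB cC injB injC
    have h1 : ‖MBB⁻¹‖ ≤ ‖M⁻¹‖ := by
      apply norm_inv_le_of_coercive hMBB (norm_nonneg _)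
      intro x
      rw [key x]
      have := coercive hM (extv cB x)
      rwa [sum_sq_extv cB injB x] at this
    have hγ' : (0:ℝ) ≤ 1/γ := by positivity
    have hfac : (0:ℝ) ≤ 1/γ + ‖MBC‖ := by positivity
    have := mul_le_mul h1 (add_le_add_right h2 (1/γ)) hfac (norm_nonneg (M⁻¹))
    linarith
end

section
/- Assume the level set {u ∈ ℝⁿ : Θ(u) ≤ Θ(u⁽⁰⁾)} is compact, and let (u⁽ʲ⁾) be generated by the B-semismooth Newton iteration (Armijo-damped iteration with the B-Newton direction, defined via the unmodified index sets) starting at u⁽⁰⁾, with Θ(u⁽ʲ⁾) > 0 for all j. Then: (i) if limsup_{j→∞} t_j > 0, the sequence (u⁽ʲ⁾) converges to a point u* with Θ(u*) = 0; (ii) if limsup_{j→∞} t_j = 0 and u* is an accumulation point of (u⁽ʲ⁾) at which the condition lim_{(u,v)→(u*,u*), u≠v} (Θ(u) − Θ(v) − Θ'(u*, u − v))/‖u − v‖₂ = 0 holds (where Θ'(u*, h) denotes the one-sided directional derivative of Θ at u* in direction h), then (u⁽ʲ⁾) converges to u* and Θ(u*) = 0. -/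
open scoped RealInnerProductSpace
open Filter Topology

noncomputable section

abbrev Euc (n : ℕ) := EuclideanSpace ℝ (Fin n)

variable {n : ℕ}

/-- Componentwise soft-thresholding operator `(S_{γw}(v))_k = sgn(v_k)·max(|v_k| − γw_k, 0)`. -/
def soft (γ : ℝ) (w : Fin n → ℝ) (v : Euc n) : Euc n :=
  WithLp.toLp 2 (fun k => Real.sign (v k) * max (|v k| - γ * w k) 0)

/-- The map `F(u) = u − S_{γw}(u − γ∇g(u))`. -/
def Fm (g : Euc n → ℝ) (γ : ℝ) (w : Fin n → ℝ) (u : Euc n) : Euc n :=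
  u - soft γ w (u - γ • gradient g u)

/-- The merit functional `Θ(u) = ‖F(u)‖₂²`. -/
def Th (g : Euc n → ℝ) (γ : ℝ) (w : Fin n → ℝ) (u : Euc n) : ℝ :=
  ‖Fm g γ w u‖ ^ 2

/-- The Hessian of `g` at `u`, applied to `d`: `∇²g(u)d`. -/
def hess (g : Euc n → ℝ) (u d : Euc n) : Euc n :=
  fderiv ℝ (gradient g) u d

/-- Standing assumptions on `g`: twice continuously differentiable, Lipschitz continuous
second derivative, and uniform bounds `c₁‖h‖² ≤ ⟨∇²g(u)h, h⟩ ≤ c₂‖h‖²`. -/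
structure Assump (n : ℕ) (g : Euc n → ℝ) (c₁ c₂ : ℝ) : Prop where
  contDiff : ContDiff ℝ 2 g
  lipHess : ∃ L : NNReal, LipschitzWith L fun u => fderiv ℝ (gradient g) u
  c1_pos : 0 < c₁
  c1_le_c2 : c₁ ≤ c₂
  lower : ∀ u h : Euc n, c₁ * ‖h‖ ^ 2 ≤ ⟪hess g u h, h⟫
  upper : ∀ u h : Euc n, ⟪hess g u h, h⟫ ≤ c₂ * ‖h‖ ^ 2

/-- `A⁺(u)`. -/
def Ap (g : Euc n → ℝ) (γ : ℝ) (w : Fin n → ℝ) (u : Euc n) : Set (Fin n) :=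
  {k | γ * gradient g u k + γ * w k < u k}

/-- `A⁻(u)`. -/
def Am (g : Euc n → ℝ) (γ : ℝ) (w : Fin n → ℝ) (u : Euc n) : Set (Fin n) :=
  {k | u k < γ * gradient g u k - γ * w k}

/-- `A(u) = A⁺(u) ∪ A⁻(u)`. -/
def Aset (g : Euc n → ℝ) (γ : ℝ) (w : Fin n → ℝ) (u : Euc n) : Set (Fin n) :=
  Ap g γ w u ∪ Am g γ w u

/-- `I°(u)`. -/
def Iz (g : Euc n → ℝ) (γ : ℝ) (w : Fin n → ℝ) (u : Euc n) : Set (Fin n) :=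
  {k | γ * gradient g u k - γ * w k < u k ∧ u k < γ * gradient g u k + γ * w k}

/-- `I⁺(u)`. -/
def Ipl (g : Euc n → ℝ) (γ : ℝ) (w : Fin n → ℝ) (u : Euc n) : Set (Fin n) :=
  {k | u k = γ * gradient g u k + γ * w k}

/-- `I⁻(u)`. -/
def Imi (g : Euc n → ℝ) (γ : ℝ) (w : Fin n → ℝ) (u : Euc n) : Set (Fin n) :=
  {k | u k = γ * gradient g u k - γ * w k}

/-- `A⁺₊(u)`. -/
def App (g : Euc n → ℝ) (γ : ℝ) (w : Fin n → ℝ) (u : Euc n) : Set (Fin n) :=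
  {k | γ * gradient g u k + γ * w k < u k ∧ u k < 0}

/-- `A⁻₋(u)`. -/
def Amm (g : Euc n → ℝ) (γ : ℝ) (w : Fin n → ℝ) (u : Euc n) : Set (Fin n) :=
  {k | 0 < u k ∧ u k < γ * gradient g u k - γ * w k}

/-- `I°₊(u)`. -/
def Izp (g : Euc n → ℝ) (γ : ℝ) (w : Fin n → ℝ) (u : Euc n) : Set (Fin n) :=
  {k | γ * gradient g u k - γ * w k < u k ∧ u k < γ * gradient g u k + γ * w k ∧
    γ * gradient g u k + γ * w k < 0}

/-- `I°₋(u)`. -/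
def Izm (g : Euc n → ℝ) (γ : ℝ) (w : Fin n → ℝ) (u : Euc n) : Set (Fin n) :=
  {k | 0 < γ * gradient g u k - γ * w k ∧ γ * gradient g u k - γ * w k < u k ∧
    u k < γ * gradient g u k + γ * w k}

/-- `Ā⁺(u) = A⁺(u) \ A⁺₊(u)`. -/
def ApBar (g : Euc n → ℝ) (γ : ℝ) (w : Fin n → ℝ) (u : Euc n) : Set (Fin n) :=
  Ap g γ w u \ App g γ w u

/-- `Ā⁻(u) = A⁻(u) \ A⁻₋(u)`. -/
def AmBar (g : Euc n → ℝ) (γ : ℝ) (w : Fin n → ℝ) (u : Euc n) : Set (Fin n) :=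
  Am g γ w u \ Amm g γ w u

/-- `Ā(u) = Ā⁺(u) ∪ Ā⁻(u)`. -/
def ABar (g : Euc n → ℝ) (γ : ℝ) (w : Fin n → ℝ) (u : Euc n) : Set (Fin n) :=
  ApBar g γ w u ∪ AmBar g γ w u

/-- `Ī°(u) = I°(u) \ (I°₊(u) ∪ I°₋(u))`. -/
def IzBar (g : Euc n → ℝ) (γ : ℝ) (w : Fin n → ℝ) (u : Euc n) : Set (Fin n) :=
  Iz g γ w u \ (Izp g γ w u ∪ Izm g γ w u)

/-- `Ī⁺(u) = I⁺(u) ∪ A⁺₊(u) ∪ I°₊(u)`. -/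
def IplBar (g : Euc n → ℝ) (γ : ℝ) (w : Fin n → ℝ) (u : Euc n) : Set (Fin n) :=
  Ipl g γ w u ∪ App g γ w u ∪ Izp g γ w u

/-- `Ī⁻(u) = I⁻(u) ∪ A⁻₋(u) ∪ I°₋(u)`. -/
def ImiBar (g : Euc n → ℝ) (γ : ℝ) (w : Fin n → ℝ) (u : Euc n) : Set (Fin n) :=
  Imi g γ w u ∪ Amm g γ w u ∪ Izm g γ w u

/-- `d` is a modified Newton direction at `u`. -/
def IsModDir (g : Euc n → ℝ) (γ : ℝ) (w : Fin n → ℝ) (u d : Euc n) : Prop :=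
  (∀ k ∈ ABar g γ w u, γ * hess g u d k = - Fm g γ w u k) ∧
  (∀ k ∈ IzBar g γ w u, d k = - u k) ∧
  (∀ k ∈ IplBar g γ w u, 0 ≤ d k + u k ∧ 0 ≤ γ * hess g u d k + Fm g γ w u k ∧
    (d k + u k) * (γ * hess g u d k + Fm g γ w u k) = 0) ∧
  (∀ k ∈ ImiBar g γ w u, d k + u k ≤ 0 ∧ γ * hess g u d k + Fm g γ w u k ≤ 0 ∧
    (d k + u k) * (γ * hess g u d k + Fm g γ w u k) = 0)

/-- `d` is a B-Newton direction at `u` (unmodified index sets). -/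
def IsBDir (g : Euc n → ℝ) (γ : ℝ) (w : Fin n → ℝ) (u d : Euc n) : Prop :=
  (∀ k ∈ Aset g γ w u, γ * hess g u d k = - Fm g γ w u k) ∧
  (∀ k ∈ Iz g γ w u, d k = - u k) ∧
  (∀ k ∈ Ipl g γ w u, 0 ≤ d k + u k ∧ 0 ≤ γ * hess g u d k + Fm g γ w u k ∧
    (d k + u k) * (γ * hess g u d k + Fm g γ w u k) = 0) ∧
  (∀ k ∈ Imi g γ w u, d k + u k ≤ 0 ∧ γ * hess g u d k + Fm g γ w u k ≤ 0 ∧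
    (d k + u k) * (γ * hess g u d k + Fm g γ w u k) = 0)

/-- `t = β^l` where `l` is the smallest nonnegative integer satisfying the Armijo inequality. -/
def ArmijoStepsize (g : Euc n → ℝ) (γ : ℝ) (w : Fin n → ℝ) (β σ : ℝ) (u d : Euc n)
    (t : ℝ) : Prop :=
  ∃ l : ℕ, t = β ^ l ∧
    Th g γ w (u + (β ^ l) • d) ≤ (1 - 2 * σ * β ^ l) * Th g γ w u ∧
    ∀ l' < l, ¬ (Th g γ w (u + (β ^ l') • d) ≤ (1 - 2 * σ * β ^ l') * Th g γ w u)

/-- The modified B-semismooth Newton iteration with Armijo damping. -/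
def ModIter (g : Euc n → ℝ) (γ : ℝ) (w : Fin n → ℝ) (β σ : ℝ)
    (useq dseq : ℕ → Euc n) (tseq : ℕ → ℝ) : Prop :=
  (∀ j, IsModDir g γ w (useq j) (dseq j)) ∧
  (∀ j, ArmijoStepsize g γ w β σ (useq j) (dseq j) (tseq j)) ∧
  (∀ j, useq (j + 1) = useq j + tseq j • dseq j)

/-- The B-semismooth Newton iteration (unmodified index sets) with Armijo damping. -/
def BIter (g : Euc n → ℝ) (γ : ℝ) (w : Fin n → ℝ) (β σ : ℝ)
    (useq dseq : ℕ → Euc n) (tseq : ℕ → ℝ) : Prop :=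
  (∀ j, IsBDir g γ w (useq j) (dseq j)) ∧
  (∀ j, ArmijoStepsize g γ w β σ (useq j) (dseq j) (tseq j)) ∧
  (∀ j, useq (j + 1) = useq j + tseq j • dseq j)


/-! ### Auxiliary lemmas -/

section AuxBasic

variable {n : ℕ} (g : Euc n → ℝ) (γ : ℝ) (w : Fin n → ℝ)

lemma soft_eq (hγ : 0 < γ) (hw : ∀ k, 0 < w k) (v : Euc n) (k : Fin n) :
    soft γ w v k = max (v k - γ * w k) 0 + min (v k + γ * w k) 0 := by
  have hγw : 0 < γ * w k := mul_pos hγ (hw k)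
  unfold soft
  simp only [WithLp.ofLp_toLp]
  rcases lt_trichotomy (v k) 0 with h | h | h
  · rw [Real.sign_of_neg h, abs_of_neg h]
    rcases le_total (v k + γ * w k) 0 with h2 | h2
    · rw [max_eq_left (by linarith), min_eq_left h2, max_eq_right (by linarith)]; ring
    · rw [max_eq_right (by linarith), min_eq_right h2, max_eq_right (by linarith)]; ring
  · simp [h, Real.sign_zero, max_eq_right hγw.le, min_eq_right hγw.le,
      max_eq_right (by linarith : -(γ * w k) ≤ (0:ℝ))]
  · rw [Real.sign_of_pos h, abs_of_pos h]
    rcases le_total (v k - γ * w k) 0 with h2 | h2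
    · rw [max_eq_right h2, min_eq_right (by linarith)]; ring
    · rw [max_eq_left h2, min_eq_right (by linarith)]; ring

lemma Fm_apply (hγ : 0 < γ) (hw : ∀ k, 0 < w k) (u : Euc n) (k : Fin n) :
    Fm g γ w u k = u k - max (u k - γ * gradient g u k - γ * w k) 0
      - min (u k - γ * gradient g u k + γ * w k) 0 := by
  have h1 : (u - γ • gradient g u) k = u k - γ * gradient g u k := rfl
  rw [show Fm g γ w u k = u k - soft γ w (u - γ • gradient g u) k from rfl,
    soft_eq γ w hγ hw, h1]
  ring

lemma Th_eq_sum (u : Euc n) : Th g γ w u = ∑ k, (Fm g γ w u k) ^ 2 := by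
  rw [Th, EuclideanSpace.norm_eq, Real.sq_sqrt (by positivity)]
  congr 1; ext k; rw [Real.norm_eq_abs, sq_abs]

lemma Th_nonneg (u : Euc n) : 0 ≤ Th g γ w u := by
  rw [Th]; positivity

lemma Fm_eq_zero_of_Th (u : Euc n) (h : Th g γ w u = 0) : Fm g γ w u = 0 := by
  rw [Th, pow_eq_zero_iff (two_ne_zero), norm_eq_zero] at h
  exact h

/-- The five regions cover everything. -/
lemma region_cases (u : Euc n) (k : Fin n) :
    k ∈ Ap g γ w u ∨ k ∈ Am g γ w u ∨ k ∈ Iz g γ w u ∨ k ∈ Ipl g γ w u ∨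
      k ∈ Imi g γ w u := by
  rcases lt_trichotomy (γ * gradient g u k + γ * w k) (u k) with h | h | h
  · exact Or.inl h
  · exact Or.inr (Or.inr (Or.inr (Or.inl h.symm)))
  rcases lt_trichotomy (u k) (γ * gradient g u k - γ * w k) with h2 | h2 | h2
  · exact Or.inr (Or.inl h2)
  · exact Or.inr (Or.inr (Or.inr (Or.inr h2)))
  · exact Or.inr (Or.inr (Or.inl ⟨h2, h⟩))

section Grad

variable {g}

lemma grad_contDiff (hg : ContDiff ℝ 2 g) : ContDiff ℝ 1 (gradient g) := by
  have h2 : ContDiff ℝ ((1 : ℕ) + 1) g := by exact_mod_cast hg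
  have h1 : ContDiff ℝ 1 (fderiv ℝ g) := (contDiff_succ_iff_fderiv.mp h2).2.2
  exact ((InnerProductSpace.toDual ℝ (Euc n)).symm.contDiff).comp h1

lemma grad_differentiable (hg : ContDiff ℝ 2 g) : Differentiable ℝ (gradient g) :=
  (grad_contDiff hg).differentiable one_ne_zero

lemma grad_continuous (hg : ContDiff ℝ 2 g) : Continuous (gradient g) :=
  (grad_contDiff hg).continuous

/-- Derivative of the gradient along a line. -/
lemma hasDerivAt_grad_line (hg : ContDiff ℝ 2 g) (u d : Euc n) (t₀ : ℝ) :
    HasDerivAt (fun t : ℝ => gradient g (u + t • d)) (hess g (u + t₀ • d) d) t₀ := by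
  have hline : HasDerivAt (fun t : ℝ => u + t • d) d t₀ := by
    simpa using ((hasDerivAt_id t₀).smul_const d).const_add u
  have hgrad := ((grad_differentiable hg) (u + t₀ • d)).hasFDerivAt
  exact hgrad.comp_hasDerivAt t₀ hline

end Grad

end AuxBasic


section AuxMono

variable {n : ℕ} {g : Euc n → ℝ} {c₁ c₂ : ℝ}

lemma strong_mono (hg : Assump n g c₁ c₂) (u v : Euc n) :
    c₁ * ‖u - v‖ ^ 2 ≤ ⟪gradient g u - gradient g v, u - v⟫ := by
  rcases eq_or_ne u v with rfl | huv
  · simp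
  set h : Euc n := u - v with hh
  have hline : ∀ t : ℝ, HasDerivAt (fun s : ℝ => ⟪h, gradient g (v + s • h)⟫)
      (⟪h, hess g (v + t • h) h⟫) t := by
    intro t
    have h1 := hasDerivAt_grad_line hg.contDiff v h t
    exact ((innerSL ℝ h).hasFDerivAt).comp_hasDerivAt t h1
  set f : ℝ → ℝ := fun s => ⟪h, gradient g (v + s • h)⟫ with hf
  have hcont : ContinuousOn f (Set.Icc 0 1) :=
    fun x _ => (hline x).continuousAt.continuousWithinAt
  obtain ⟨c, _, hc⟩ := exists_hasDerivAt_eq_slope f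
    (fun t => ⟪h, hess g (v + t • h) h⟫) (by norm_num) hcont
    (fun x _ => hline x)
  have hlow : c₁ * ‖h‖ ^ 2 ≤ ⟪h, hess g (v + c • h) h⟫ := by
    rw [real_inner_comm]; exact hg.lower _ _
  have hf1 : f 1 = ⟪h, gradient g u⟫ := by
    simp only [hf, one_smul, hh]; rw [add_sub_cancel]
  have hf0 : f 0 = ⟪h, gradient g v⟫ := by simp [hf]
  rw [hc, hf1, hf0] at hlow
  have : ⟪gradient g u - gradient g v, u - v⟫
      = ⟪h, gradient g u⟫ - ⟪h, gradient g v⟫ := by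
    rw [real_inner_comm, inner_sub_right]
  rw [this]
  calc c₁ * ‖u - v‖ ^ 2 = c₁ * ‖h‖ ^ 2 := rfl
    _ ≤ _ := by linarith [hlow]

lemma fixed_char {γ : ℝ} {w : Fin n → ℝ} (hγ : 0 < γ) (hw : ∀ k, 0 < w k)
    {u : Euc n} (h : Fm g γ w u = 0) (k : Fin n) :
    |gradient g u k| ≤ w k ∧ gradient g u k * u k = -(w k * |u k|) := by
  have h0 : Fm g γ w u k = 0 := by rw [h]; rfl
  rw [Fm_apply g γ w hγ hw] at h0
  set a := gradient g u k with ha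
  set e := u k with he
  have hW : 0 < γ * w k := mul_pos hγ (hw k)
  rcases lt_or_ge (γ * w k) (e - γ * a) with h1 | h1
  · rw [max_eq_left (by linarith), min_eq_right (by linarith)] at h0
    have hae : a = -w k := by
      have := mul_left_cancel₀ (ne_of_gt hγ) (show γ * a = γ * (-w k) by linarith)
      linarith [this]
    have hepos : 0 < e := by nlinarith
    constructor
    · rw [hae, abs_neg, abs_of_pos (hw k)]
    · rw [hae, abs_of_pos hepos]; ring
  rcases lt_or_ge (e - γ * a) (-(γ * w k)) with h2 | h2
  · rw [max_eq_right (by linarith), min_eq_left (by linarith)] at h0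
    have hae : a = w k := by
      have := mul_left_cancel₀ (ne_of_gt hγ) (show γ * a = γ * w k by linarith)
      linarith [this]
    have heneg : e < 0 := by nlinarith
    constructor
    · rw [hae, abs_of_pos (hw k)]
    · rw [hae, abs_of_neg heneg]; ring
  · rw [max_eq_right (by linarith), min_eq_right (by linarith)] at h0
    have he0 : e = 0 := by linarith
    constructor
    · have : |γ * a| ≤ γ * w k := abs_le.mpr ⟨by linarith, by linarith⟩
      rw [abs_mul, abs_of_pos hγ] at this
      exact le_of_mul_le_mul_left this hγ
    · rw [he0]; simp

lemma zero_unique (hg : Assump n g c₁ c₂) {γ : ℝ} {w : Fin n → ℝ}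
    (hγ : 0 < γ) (hw : ∀ k, 0 < w k) {u v : Euc n}
    (hu : Fm g γ w u = 0) (hv : Fm g γ w v = 0) : u = v := by
  by_contra huv
  have hm := strong_mono hg u v
  have hsum : ⟪gradient g u - gradient g v, u - v⟫ ≤ 0 := by
    rw [PiLp.inner_apply]
    apply Finset.sum_nonpos
    intro k _
    obtain ⟨ha1, ha2⟩ := fixed_char hγ hw hu k
    obtain ⟨hb1, hb2⟩ := fixed_char hγ hw hv k
    have h1 : -(gradient g u k * v k) ≤ w k * |v k| := by
      calc -(gradient g u k * v k) ≤ |gradient g u k * v k| := neg_le_abs _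
        _ = |gradient g u k| * |v k| := abs_mul _ _
        _ ≤ w k * |v k| := mul_le_mul_of_nonneg_right ha1 (abs_nonneg _)
    have h2 : -(gradient g v k * u k) ≤ w k * |u k| := by
      calc -(gradient g v k * u k) ≤ |gradient g v k * u k| := neg_le_abs _
        _ = |gradient g v k| * |u k| := abs_mul _ _
        _ ≤ w k * |u k| := mul_le_mul_of_nonneg_right hb1 (abs_nonneg _)
    have hval : (gradient g u - gradient g v) k = gradient g u k - gradient g v k := rfl
    have hval2 : (u - v) k = u k - v k := rfl
    simp only [RCLike.inner_apply, conj_trivial, hval, hval2]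
    nlinarith [abs_nonneg (u k), abs_nonneg (v k)]
  have hnorm : 0 < ‖u - v‖ := by
    rw [norm_pos_iff]; exact sub_ne_zero_of_ne huv
  nlinarith [mul_pos hg.c1_pos (pow_pos hnorm 2)]

lemma Fm_comp_continuous (hg : Assump n g c₁ c₂) {γ : ℝ} {w : Fin n → ℝ}
    (hγ : 0 < γ) (hw : ∀ k, 0 < w k) (k : Fin n) :
    Continuous fun u : Euc n => Fm g γ w u k := by
  have h1 : Continuous fun u : Euc n => u k := (EuclideanSpace.proj k).continuous
  have h2 : Continuous fun u : Euc n => gradient g u k :=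
    ((EuclideanSpace.proj (𝕜 := ℝ) k).continuous).comp (grad_continuous hg.contDiff)
  have hX : Continuous fun u : Euc n => u k - γ * gradient g u k :=
    h1.sub (continuous_const.mul h2)
  simp only [Fm_apply g γ w hγ hw]
  exact (h1.sub (((hX.sub continuous_const).max continuous_const))).sub
    ((hX.add continuous_const).min continuous_const)

lemma Th_continuous (hg : Assump n g c₁ c₂) {γ : ℝ} {w : Fin n → ℝ}
    (hγ : 0 < γ) (hw : ∀ k, 0 < w k) : Continuous (Th g γ w) := by
  have : (Th g γ w) = fun u => ∑ k, (Fm g γ w u k) ^ 2 := funext (Th_eq_sum g γ w)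
  rw [this]
  exact continuous_finset_sum _ fun k _ => (Fm_comp_continuous hg hγ hw k).pow 2

end AuxMono


section AuxDD

open Filter

lemma dd_max {f : ℝ → ℝ} {y : ℝ} (hf : HasDerivAt f y 0) :
    Tendsto (fun t => (max (f t) 0 - max (f 0) 0) / t) (𝓝[>] 0)
      (𝓝 (if 0 < f 0 then y else if f 0 = 0 then max y 0 else 0)) := by
  have hmono : 𝓝[>] (0:ℝ) ≤ 𝓝[≠] 0 :=
    nhdsWithin_mono 0 fun x hx => ne_of_gt hx
  have hslope : Tendsto (fun t => (f t - f 0) / t) (𝓝[>] 0) (𝓝 y) := by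
    have h1 := (hasDerivAt_iff_tendsto_slope.mp hf).mono_left hmono
    refine h1.congr fun t => ?_
    simp [slope_fun_def, div_eq_inv_mul]
  rcases lt_trichotomy (f 0) 0 with h0 | h0 | h0
  · rw [if_neg (by linarith), if_neg (by linarith)]
    have hc : ∀ᶠ t in 𝓝 (0:ℝ), f t < 0 := hf.continuousAt.eventually_lt_const h0
    have hev : ∀ᶠ t in 𝓝[>] (0:ℝ), (0:ℝ) = (max (f t) 0 - max (f 0) 0) / t := by
      filter_upwards [hc.filter_mono nhdsWithin_le_nhds] with t ht
      rw [max_eq_right ht.le, max_eq_right h0.le, sub_zero, zero_div]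
    exact tendsto_const_nhds.congr' hev
  · rw [if_neg (by simp [h0]), if_pos h0]
    have hev : ∀ᶠ t in 𝓝[>] (0:ℝ),
        max ((f t - f 0) / t) 0 = (max (f t) 0 - max (f 0) 0) / t := by
      filter_upwards [self_mem_nhdsWithin] with t (ht : 0 < t)
      rw [h0, sub_zero, max_self, sub_zero]
      rcases le_total (f t) 0 with h | h
      · rw [max_eq_right h, max_eq_right (div_nonpos_of_nonpos_of_nonneg h ht.le), zero_div]
      · rw [max_eq_left h, max_eq_left (div_nonneg h ht.le)]
    exact (hslope.max tendsto_const_nhds).congr' hev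
  · rw [if_pos h0]
    have hc : ∀ᶠ t in 𝓝 (0:ℝ), 0 < f t := hf.continuousAt.eventually_const_lt h0
    have hev : ∀ᶠ t in 𝓝[>] (0:ℝ),
        (f t - f 0) / t = (max (f t) 0 - max (f 0) 0) / t := by
      filter_upwards [hc.filter_mono nhdsWithin_le_nhds] with t ht
      rw [max_eq_left ht.le, max_eq_left h0.le]
    exact hslope.congr' hev

lemma dd_min {f : ℝ → ℝ} {y : ℝ} (hf : HasDerivAt f y 0) :
    Tendsto (fun t => (min (f t) 0 - min (f 0) 0) / t) (𝓝[>] 0)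
      (𝓝 (if f 0 < 0 then y else if f 0 = 0 then min y 0 else 0)) := by
  have hmono : 𝓝[>] (0:ℝ) ≤ 𝓝[≠] 0 :=
    nhdsWithin_mono 0 fun x hx => ne_of_gt hx
  have hslope : Tendsto (fun t => (f t - f 0) / t) (𝓝[>] 0) (𝓝 y) := by
    have h1 := (hasDerivAt_iff_tendsto_slope.mp hf).mono_left hmono
    refine h1.congr fun t => ?_
    simp [slope_fun_def, div_eq_inv_mul]
  rcases lt_trichotomy (f 0) 0 with h0 | h0 | h0
  · rw [if_pos h0]
    have hc : ∀ᶠ t in 𝓝 (0:ℝ), f t < 0 := hf.continuousAt.eventually_lt_const h0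
    have hev : ∀ᶠ t in 𝓝[>] (0:ℝ),
        (f t - f 0) / t = (min (f t) 0 - min (f 0) 0) / t := by
      filter_upwards [hc.filter_mono nhdsWithin_le_nhds] with t ht
      rw [min_eq_left ht.le, min_eq_left h0.le]
    exact hslope.congr' hev
  · rw [if_neg (by simp [h0]), if_pos h0]
    have hev : ∀ᶠ t in 𝓝[>] (0:ℝ),
        min ((f t - f 0) / t) 0 = (min (f t) 0 - min (f 0) 0) / t := by
      filter_upwards [self_mem_nhdsWithin] with t (ht : 0 < t)
      rw [h0, sub_zero, min_self, sub_zero]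
      rcases le_total (f t) 0 with h | h
      · rw [min_eq_left h, min_eq_left (div_nonpos_of_nonpos_of_nonneg h ht.le)]
      · rw [min_eq_right h, min_eq_right (div_nonneg h ht.le), zero_div]
    exact (hslope.min tendsto_const_nhds).congr' hev
  · rw [if_neg (by linarith), if_neg (by linarith)]
    have hc : ∀ᶠ t in 𝓝 (0:ℝ), 0 < f t := hf.continuousAt.eventually_const_lt h0
    have hev : ∀ᶠ t in 𝓝[>] (0:ℝ), (0:ℝ) = (min (f t) 0 - min (f 0) 0) / t := by
      filter_upwards [hc.filter_mono nhdsWithin_le_nhds] with t ht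
      rw [min_eq_right ht.le, min_eq_right h0.le, sub_zero, zero_div]
    exact tendsto_const_nhds.congr' hev

end AuxDD


section AuxDescent

variable {n : ℕ} {g : Euc n → ℝ} {c₁ c₂ : ℝ} {γ : ℝ} {w : Fin n → ℝ}

lemma Fm_val_Iz (hγ : 0 < γ) (hw : ∀ k, 0 < w k) {u : Euc n} {k : Fin n}
    (h : k ∈ Iz g γ w u) : Fm g γ w u k = u k := by
  obtain ⟨h1, h2⟩ := h
  rw [Fm_apply g γ w hγ hw, max_eq_right (by linarith), min_eq_right (by linarith)]
  ring

lemma Fm_val_Ipl (hγ : 0 < γ) (hw : ∀ k, 0 < w k) {u : Euc n} {k : Fin n}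
    (h : k ∈ Ipl g γ w u) : Fm g γ w u k = u k := by
  have h' : u k = γ * gradient g u k + γ * w k := h
  have hwk : 0 < γ * w k := mul_pos hγ (hw k)
  rw [Fm_apply g γ w hγ hw, max_eq_right (by linarith), min_eq_right (by linarith)]
  ring

lemma Fm_val_Imi (hγ : 0 < γ) (hw : ∀ k, 0 < w k) {u : Euc n} {k : Fin n}
    (h : k ∈ Imi g γ w u) : Fm g γ w u k = u k := by
  have h' : u k = γ * gradient g u k - γ * w k := h
  have hwk : 0 < γ * w k := mul_pos hγ (hw k)
  rw [Fm_apply g γ w hγ hw, max_eq_right (by linarith), min_eq_right (by linarith)]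
  ring

/-- Componentwise one-sided derivative of `t ↦ F(u + t d)_k` equals `-F(u)_k`
for the B-Newton direction `d`. -/
lemma Fm_quot_tendsto (hg : Assump n g c₁ c₂) (hγ : 0 < γ) (hw : ∀ k, 0 < w k)
    {u d : Euc n} (hd : IsBDir g γ w u d) (k : Fin n) :
    Tendsto (fun t : ℝ => (Fm g γ w (u + t • d) k - Fm g γ w u k) / t) (𝓝[>] 0)
      (𝓝 (-(Fm g γ w u k))) := by
  obtain ⟨hdA, hdIz, hdIpl, hdImi⟩ := hd
  have hwk : 0 < γ * w k := mul_pos hγ (hw k)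
  set f : ℝ → ℝ := fun t => u k + t * d k - γ * gradient g (u + t • d) k with hfdef
  have hline : HasDerivAt (fun t : ℝ => gradient g (u + t • d)) (hess g u d) 0 := by
    have := hasDerivAt_grad_line hg.contDiff u d 0
    simpa using this
  have hlinek : HasDerivAt (fun t : ℝ => gradient g (u + t • d) k) (hess g u d k) 0 := by
    have := (EuclideanSpace.proj (𝕜 := ℝ) k).hasFDerivAt.comp_hasDerivAt 0 hline
    exact this
  have hf : HasDerivAt f (d k - γ * hess g u d k) 0 := by
    have h1 : HasDerivAt (fun t : ℝ => u k + t * d k) (d k) 0 := by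
      simpa using ((hasDerivAt_id (0:ℝ)).mul_const (d k)).const_add (u k)
    exact h1.sub (hlinek.const_mul γ)
  have hf0 : f 0 = u k - γ * gradient g u k := by simp [hfdef]
  have hT2 := dd_max (hf.sub_const (γ * w k))
  have hT3 := dd_min (hf.add_const (γ * w k))
  simp only [Function.comp] at hT2 hT3
  have hcomb : ∀ Dmax Dmin : ℝ,
      Tendsto (fun t => (max (f t - γ * w k) 0 - max (f 0 - γ * w k) 0) / t)
        (𝓝[>] 0) (𝓝 Dmax) →
      Tendsto (fun t => (min (f t + γ * w k) 0 - min (f 0 + γ * w k) 0) / t)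
        (𝓝[>] 0) (𝓝 Dmin) →
      Tendsto (fun t : ℝ => (Fm g γ w (u + t • d) k - Fm g γ w u k) / t) (𝓝[>] 0)
        (𝓝 (d k - Dmax - Dmin)) := by
    intro Dmax Dmin h2 h3
    have hFt : ∀ t : ℝ, Fm g γ w (u + t • d) k
        = u k + t * d k - max (f t - γ * w k) 0 - min (f t + γ * w k) 0 := by
      intro t
      rw [Fm_apply g γ w hγ hw]
      rfl
    have hFu : Fm g γ w u k
        = u k - max (f 0 - γ * w k) 0 - min (f 0 + γ * w k) 0 := by
      rw [Fm_apply g γ w hγ hw, hf0]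
    have hev : ∀ᶠ t in 𝓝[>] (0:ℝ),
        d k - (max (f t - γ * w k) 0 - max (f 0 - γ * w k) 0) / t
          - (min (f t + γ * w k) 0 - min (f 0 + γ * w k) 0) / t
        = (Fm g γ w (u + t • d) k - Fm g γ w u k) / t := by
      filter_upwards [self_mem_nhdsWithin] with t (ht : 0 < t)
      rw [hFt t, hFu]
      field_simp
      ring
    exact ((tendsto_const_nhds.sub h2).sub h3).congr' hev
  rcases region_cases g γ w u k with h | h | h | h | h
  · -- A⁺
    have h' : γ * gradient g u k + γ * w k < u k := h
    rw [if_pos (by rw [hf0]; linarith)] at hT2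
    rw [if_neg (by rw [hf0]; push_neg; linarith), if_neg (by rw [hf0]; intro hc; linarith)] at hT3
    have hlim := hcomb _ _ hT2 hT3
    have heq : d k - (d k - γ * hess g u d k) - 0 = -(Fm g γ w u k) := by
      have := hdA k (Or.inl h)
      linarith
    rwa [heq] at hlim
  · -- A⁻
    have h' : u k < γ * gradient g u k - γ * w k := h
    rw [if_neg (by rw [hf0]; push_neg; linarith), if_neg (by rw [hf0]; intro hc; linarith)] at hT2
    rw [if_pos (by rw [hf0]; linarith)] at hT3
    have hlim := hcomb _ _ hT2 hT3
    have heq : d k - 0 - (d k - γ * hess g u d k) = -(Fm g γ w u k) := by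
      have := hdA k (Or.inr h)
      linarith
    rwa [heq] at hlim
  · -- I°
    obtain ⟨h1, h2⟩ := h
    rw [if_neg (by rw [hf0]; push_neg; linarith), if_neg (by rw [hf0]; intro hc; linarith)] at hT2
    rw [if_neg (by rw [hf0]; push_neg; linarith), if_neg (by rw [hf0]; intro hc; linarith)] at hT3
    have hlim := hcomb _ _ hT2 hT3
    have heq : d k - 0 - 0 = -(Fm g γ w u k) := by
      rw [Fm_val_Iz hγ hw ⟨h1, h2⟩]
      have := hdIz k ⟨h1, h2⟩
      linarith
    rwa [heq] at hlim
  · -- I⁺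
    have h' : u k = γ * gradient g u k + γ * w k := h
    rw [if_neg (by rw [hf0]; push_neg; linarith), if_pos (by rw [hf0]; linarith)] at hT2
    rw [if_neg (by rw [hf0]; push_neg; linarith), if_neg (by rw [hf0]; intro hc; linarith)] at hT3
    have hlim := hcomb _ _ hT2 hT3
    obtain ⟨hc1, hc2, hc3⟩ := hdIpl k h
    have hFv := Fm_val_Ipl hγ hw h
    rw [hFv] at hc2 hc3
    have heq : d k - max (d k - γ * hess g u d k) 0 - 0 = -(Fm g γ w u k) := by
      rw [hFv]
      rcases mul_eq_zero.mp hc3 with hz | hz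
      · rw [max_eq_right (by linarith)]
        linarith
      · rw [max_eq_left (by linarith)]
        linarith
    rwa [heq] at hlim
  · -- I⁻
    have h' : u k = γ * gradient g u k - γ * w k := h
    rw [if_neg (by rw [hf0]; push_neg; linarith), if_neg (by rw [hf0]; intro hc; linarith)] at hT2
    rw [if_neg (by rw [hf0]; push_neg; linarith), if_pos (by rw [hf0]; linarith)] at hT3
    have hlim := hcomb _ _ hT2 hT3
    obtain ⟨hc1, hc2, hc3⟩ := hdImi k h
    have hFv := Fm_val_Imi hγ hw h
    rw [hFv] at hc2 hc3
    have heq : d k - 0 - min (d k - γ * hess g u d k) 0 = -(Fm g γ w u k) := by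
      rw [hFv]
      rcases mul_eq_zero.mp hc3 with hz | hz
      · rw [min_eq_right (by linarith)]
        linarith
      · rw [min_eq_left (by linarith)]
        linarith
    rwa [heq] at hlim

/-- Descent property: the one-sided derivative of `Θ` along the B-Newton direction
is `-2Θ(u)`. -/
lemma descent (hg : Assump n g c₁ c₂) (hγ : 0 < γ) (hw : ∀ k, 0 < w k)
    {u d : Euc n} (hd : IsBDir g γ w u d) :
    Tendsto (fun t : ℝ => (Th g γ w (u + t • d) - Th g γ w u) / t) (𝓝[>] 0)
      (𝓝 (-2 * Th g γ w u)) := by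
  have hq := fun k => Fm_quot_tendsto hg hγ hw hd k
  have ht0 : Tendsto (fun t : ℝ => t) (𝓝[>] (0:ℝ)) (𝓝 0) :=
    (continuous_id.tendsto (0:ℝ)).mono_left nhdsWithin_le_nhds
  have hcont : ∀ k, Tendsto (fun t : ℝ => Fm g γ w (u + t • d) k) (𝓝[>] 0)
      (𝓝 (Fm g γ w u k)) := by
    intro k
    have h1 : Tendsto (fun t : ℝ => Fm g γ w u k
        + t * ((Fm g γ w (u + t • d) k - Fm g γ w u k) / t)) (𝓝[>] 0)
        (𝓝 (Fm g γ w u k + 0 * (-(Fm g γ w u k)))) :=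
      tendsto_const_nhds.add (ht0.mul (hq k))
    rw [zero_mul, add_zero] at h1
    refine h1.congr' ?_
    filter_upwards [self_mem_nhdsWithin] with t (ht : 0 < t)
    field_simp
    ring
  have hsum : Tendsto (fun t : ℝ => ∑ k, (Fm g γ w (u + t • d) k + Fm g γ w u k)
      * ((Fm g γ w (u + t • d) k - Fm g γ w u k) / t)) (𝓝[>] 0)
      (𝓝 (∑ k, (Fm g γ w u k + Fm g γ w u k) * (-(Fm g γ w u k)))) :=
    tendsto_finset_sum _ fun k _ => ((hcont k).add tendsto_const_nhds).mul (hq k)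
  have hval : (∑ k, (Fm g γ w u k + Fm g γ w u k) * (-(Fm g γ w u k)))
      = -2 * Th g γ w u := by
    rw [Th_eq_sum, Finset.mul_sum]
    congr 1; ext k; ring
  rw [hval] at hsum
  refine hsum.congr' ?_
  filter_upwards [self_mem_nhdsWithin] with t (ht : 0 < t)
  rw [Th_eq_sum, Th_eq_sum, ← Finset.sum_sub_distrib, Finset.sum_div]
  congr 1; ext k
  field_simp
  ring

end AuxDescent


section AuxBound

variable {n : ℕ} {g : Euc n → ℝ} {c₁ c₂ : ℝ} {γ : ℝ} {w : Fin n → ℝ}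

lemma Fm_zero_of_dir_zero (hγ : 0 < γ) (hw : ∀ k, 0 < w k) {u : Euc n}
    (hd : IsBDir g γ w u 0) : Fm g γ w u = 0 := by
  obtain ⟨hdA, hdIz, hdIpl, hdImi⟩ := hd
  have hz : hess g u (0 : Euc n) = 0 := (fderiv ℝ (gradient g) u).map_zero
  refine PiLp.ext fun k => ?_
  show Fm g γ w u k = (0 : Euc n) k
  have h0k : (0 : Euc n) k = 0 := rfl
  rw [h0k]
  rcases region_cases g γ w u k with h | h | h | h | h
  · have := hdA k (Or.inl h); rw [hz] at this
    simp only [h0k] at this; linarith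
  · have := hdA k (Or.inr h); rw [hz] at this
    simp only [h0k] at this; linarith
  · have := hdIz k h
    rw [Fm_val_Iz hγ hw h]
    simp only [h0k] at this; linarith
  · obtain ⟨hc1, hc2, hc3⟩ := hdIpl k h
    rw [hz] at hc3
    rw [Fm_val_Ipl hγ hw h] at hc3 ⊢
    simp only [h0k] at hc3
    have : u k * u k = 0 := by nlinarith [hc3]
    nlinarith [this]
  · obtain ⟨hc1, hc2, hc3⟩ := hdImi k h
    rw [hz] at hc3
    rw [Fm_val_Imi hγ hw h] at hc3 ⊢
    simp only [h0k] at hc3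
    have : u k * u k = 0 := by nlinarith [hc3]
    nlinarith [this]

lemma abs_sum_le_norm_mul_norm (x y : Euc n) :
    ∑ k, |x k| * |y k| ≤ ‖x‖ * ‖y‖ := by
  set x' : Euc n := WithLp.toLp 2 (fun k => |x k|) with hx'
  set y' : Euc n := WithLp.toLp 2 (fun k => |y k|) with hy'
  have hx : ‖x'‖ = ‖x‖ := by
    rw [EuclideanSpace.norm_eq x', EuclideanSpace.norm_eq x]
    congr 1; congr 1; ext k
    rw [show x' k = |x k| from rfl, Real.norm_eq_abs, Real.norm_eq_abs, abs_abs]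
  have hy : ‖y'‖ = ‖y‖ := by
    rw [EuclideanSpace.norm_eq y', EuclideanSpace.norm_eq y]
    congr 1; congr 1; ext k
    rw [show y' k = |y k| from rfl, Real.norm_eq_abs, Real.norm_eq_abs, abs_abs]
  have h0 := real_inner_le_norm x' y'
  rw [PiLp.inner_apply, hx, hy] at h0
  simpa [RCLike.inner_apply, conj_trivial, hx', hy', mul_comm] using h0

lemma dir_bound (hg : Assump n g c₁ c₂) (hγ : 0 < γ) (hw : ∀ k, 0 < w k)
    {u d : Euc n} (hd : IsBDir g γ w u d) :
    γ * c₁ * ‖d‖ ^ 2 ≤ (‖Fm g γ w u‖ + γ * ‖u‖ * ‖fderiv ℝ (gradient g) u‖) * ‖d‖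
      + ‖u‖ * ‖Fm g γ w u‖ := by
  obtain ⟨hdA, hdIz, hdIpl, hdImi⟩ := hd
  have hlow : γ * (c₁ * ‖d‖ ^ 2) ≤ γ * ⟪hess g u d, d⟫ :=
    mul_le_mul_of_nonneg_left (hg.lower u d) hγ.le
  have hinner : ⟪hess g u d, d⟫ = ∑ k, hess g u d k * d k := by
    rw [PiLp.inner_apply]
    simp [RCLike.inner_apply, conj_trivial]
    exact Finset.sum_congr rfl fun k _ => mul_comm _ _
  have hterm : ∀ k, γ * (hess g u d k * d k)
      ≤ |Fm g γ w u k| * |d k| + γ * (|u k| * |hess g u d k|) + |u k| * |Fm g γ w u k| := by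
    intro k
    have habs1 : -(Fm g γ w u k * d k) ≤ |Fm g γ w u k| * |d k| := by
      rw [← abs_mul]; exact neg_le_abs _
    have habs2 : -(hess g u d k * u k) ≤ |u k| * |hess g u d k| := by
      rw [mul_comm (|u k|), ← abs_mul]; exact neg_le_abs _
    have habs3 : -(u k * Fm g γ w u k) ≤ |u k| * |Fm g γ w u k| := by
      rw [← abs_mul]; exact neg_le_abs _
    have hg2 : γ * (-(hess g u d k * u k)) ≤ γ * (|u k| * |hess g u d k|) :=
      mul_le_mul_of_nonneg_left habs2 hγ.le
    have hnn1 : (0:ℝ) ≤ |Fm g γ w u k| * |d k| := by positivity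
    have hnn2 : (0:ℝ) ≤ γ * (|u k| * |hess g u d k|) := by positivity
    have hnn3 : (0:ℝ) ≤ |u k| * |Fm g γ w u k| := by positivity
    rcases region_cases g γ w u k with h | h | h | h | h
    · have hA := hdA k (Or.inl h)
      have heq : γ * (hess g u d k * d k) = -(Fm g γ w u k * d k) := by
        linear_combination (d k) * hA
      linarith
    · have hA := hdA k (Or.inr h)
      have heq : γ * (hess g u d k * d k) = -(Fm g γ w u k * d k) := by
        linear_combination (d k) * hA
      linarith
    · have hIz := hdIz k h
      have heq : γ * (hess g u d k * d k) = γ * (-(hess g u d k * u k)) := by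
        linear_combination (γ * hess g u d k) * hIz
      linarith
    · obtain ⟨hc1, hc2, hc3⟩ := hdIpl k h
      have heq : γ * (hess g u d k * d k)
          = -(Fm g γ w u k * d k) + γ * (-(hess g u d k * u k)) + -(u k * Fm g γ w u k) := by
        linear_combination hc3
      linarith
    · obtain ⟨hc1, hc2, hc3⟩ := hdImi k h
      have heq : γ * (hess g u d k * d k)
          = -(Fm g γ w u k * d k) + γ * (-(hess g u d k * u k)) + -(u k * Fm g γ w u k) := by
        linear_combination hc3
      linarith
  have hsum : γ * ⟪hess g u d, d⟫
      ≤ (∑ k, |Fm g γ w u k| * |d k|) + γ * (∑ k, |u k| * |hess g u d k|)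
        + ∑ k, |u k| * |Fm g γ w u k| := by
    rw [hinner, Finset.mul_sum, Finset.mul_sum]
    rw [← Finset.sum_add_distrib, ← Finset.sum_add_distrib]
    exact Finset.sum_le_sum fun k _ => hterm k
  have hcs1 : ∑ k, |Fm g γ w u k| * |d k| ≤ ‖Fm g γ w u‖ * ‖d‖ :=
    abs_sum_le_norm_mul_norm _ _
  have hcs2 : ∑ k, |u k| * |hess g u d k| ≤ ‖u‖ * ‖hess g u d‖ :=
    abs_sum_le_norm_mul_norm _ _
  have hcs3 : ∑ k, |u k| * |Fm g γ w u k| ≤ ‖u‖ * ‖Fm g γ w u‖ :=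
    abs_sum_le_norm_mul_norm _ _
  have hop : ‖hess g u d‖ ≤ ‖fderiv ℝ (gradient g) u‖ * ‖d‖ :=
    (fderiv ℝ (gradient g) u).le_opNorm d
  have h2 : γ * (‖u‖ * ‖hess g u d‖) ≤ γ * (‖u‖ * (‖fderiv ℝ (gradient g) u‖ * ‖d‖)) := by
    apply mul_le_mul_of_nonneg_left _ hγ.le
    exact mul_le_mul_of_nonneg_left hop (norm_nonneg u)
  have h3 : γ * (∑ k, |u k| * |hess g u d k|) ≤ γ * (‖u‖ * ‖hess g u d‖) :=
    mul_le_mul_of_nonneg_left hcs2 hγ.le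
  nlinarith [hlow, hsum, hcs1, hcs3]

end AuxBound

set_option maxHeartbeats 3200000 in
/-- global convergence of the B-semismooth Newton method
(unmodified index sets): (i) if the stepsizes do not tend to zero, the iterates
converge to a zero of `Θ`; (ii) if they do tend to zero and the technical
condition on `Θ` holds at an accumulation point `u*`, the iterates converge to
`u*` and `Θ(u*) = 0`. -/
theorem stmt15 {n : ℕ} (hn : 1 ≤ n) (c₁ c₂ : ℝ) (g : Euc n → ℝ) (hg : Assump n g c₁ c₂)
    (w : Fin n → ℝ) (hw : ∀ k, 0 < w k) (γ : ℝ) (hγ : 0 < γ)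
    (β σ : ℝ) (hβ : β ∈ Set.Ioo (0 : ℝ) 1) (hσ : σ ∈ Set.Ioo (0 : ℝ) (1 / 2))
    (useq dseq : ℕ → Euc n) (tseq : ℕ → ℝ)
    (hiter : BIter g γ w β σ useq dseq tseq)
    (hpos : ∀ j, 0 < Th g γ w (useq j))
    (hcpt : IsCompact {x : Euc n | Th g γ w x ≤ Th g γ w (useq 0)}) :
    (0 < Filter.limsup tseq atTop →
      ∃ ustar : Euc n, Tendsto useq atTop (𝓝 ustar) ∧ Th g γ w ustar = 0) ∧
    (Filter.limsup tseq atTop = 0 →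
      ∀ (ustar : Euc n) (DTh : Euc n → ℝ),
        (∃ φ : ℕ → ℕ, StrictMono φ ∧ Tendsto (useq ∘ φ) atTop (𝓝 ustar)) →
        (∀ h : Euc n,
          Tendsto (fun t : ℝ => (Th g γ w (ustar + t • h) - Th g γ w ustar) / t)
            (𝓝[>] 0) (𝓝 (DTh h))) →
        Tendsto
          (fun p : Euc n × Euc n =>
            (Th g γ w p.1 - Th g γ w p.2 - DTh (p.1 - p.2)) / ‖p.1 - p.2‖)
          (𝓝[{p : Euc n × Euc n | p.1 ≠ p.2}] (ustar, ustar)) (𝓝 0) →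
        Tendsto useq atTop (𝓝 ustar) ∧ Th g γ w ustar = 0) := by
  obtain ⟨hdir, harm, hstep⟩ := hiter
  obtain ⟨hβ0, hβ1⟩ := hβ
  obtain ⟨hσ0, hσ1⟩ := hσ
  have hTnn : ∀ u : Euc n, 0 ≤ Th g γ w u := Th_nonneg g γ w
  have ht_pos : ∀ j, 0 < tseq j := by
    intro j; obtain ⟨l, hl, -, -⟩ := harm j; rw [hl]; exact pow_pos hβ0 l
  have ht_le1 : ∀ j, tseq j ≤ 1 := by
    intro j; obtain ⟨l, hl, -, -⟩ := harm j; rw [hl]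
    exact pow_le_one₀ hβ0.le hβ1.le
  have hdecr : ∀ j, Th g γ w (useq (j+1)) ≤ (1 - 2*σ*tseq j) * Th g γ w (useq j) := by
    intro j; obtain ⟨l, hl, ha, -⟩ := harm j
    rw [hstep j, hl]
    exact ha
  have hanti' : ∀ j, Th g γ w (useq (j+1)) ≤ Th g γ w (useq j) := by
    intro j
    have h1 := hdecr j
    have hx : 0 ≤ 2*σ*tseq j*Th g γ w (useq j) :=
      mul_nonneg (mul_nonneg (mul_nonneg two_pos.le hσ0.le) (ht_pos j).le) (hTnn _)
    linarith
  have hmono : Antitone (fun j => Th g γ w (useq j)) := antitone_nat_of_succ_le hanti'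
  have hlev : ∀ j, Th g γ w (useq j) ≤ Th g γ w (useq 0) := fun j => hmono (Nat.zero_le j)
  have hK : ∀ j, useq j ∈ {x : Euc n | Th g γ w x ≤ Th g γ w (useq 0)} := hlev
  have hbdd : BddBelow (Set.range fun j => Th g γ w (useq j)) := by
    refine ⟨0, ?_⟩; rintro x ⟨j, rfl⟩; exact hTnn _
  have hΘinf : Tendsto (fun j => Th g γ w (useq j)) atTop (𝓝 (⨅ j, Th g γ w (useq j))) :=
    tendsto_atTop_ciInf hmono hbdd
  have hθinf_nonneg : 0 ≤ ⨅ j, Th g γ w (useq j) := le_ciInf fun j => hTnn _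
  have hconverge : Tendsto (fun j => Th g γ w (useq j)) atTop (𝓝 0) →
      ∃ z, Tendsto useq atTop (𝓝 z) ∧ Th g γ w z = 0 := by
    intro hθ0
    obtain ⟨z, hzK, ψ, hψ, hzconv⟩ := hcpt.tendsto_subseq hK
    have hTz : Th g γ w z = 0 := by
      have h1 : Tendsto (fun i => Th g γ w (useq (ψ i))) atTop (𝓝 (Th g γ w z)) :=
        ((Th_continuous hg hγ hw).continuousAt.tendsto).comp hzconv
      have h2 : Tendsto (fun i => Th g γ w (useq (ψ i))) atTop (𝓝 0) :=
        hθ0.comp hψ.tendsto_atTop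
      exact tendsto_nhds_unique h1 h2
    refine ⟨z, ?_, hTz⟩
    apply tendsto_of_subseq_tendsto
    intro ns hns
    obtain ⟨a, haK, ms, hms, haconv⟩ := hcpt.tendsto_subseq (fun i => hK (ns i))
    have hTa : Th g γ w a = 0 := by
      have h1 : Tendsto (fun i => Th g γ w (useq (ns (ms i)))) atTop (𝓝 (Th g γ w a)) :=
        ((Th_continuous hg hγ hw).continuousAt.tendsto).comp haconv
      have h2 : Tendsto (fun i => Th g γ w (useq (ns (ms i)))) atTop (𝓝 0) :=
        (hθ0.comp hns).comp hms.tendsto_atTop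
      exact tendsto_nhds_unique h1 h2
    have haz : a = z := zero_unique hg hγ hw
      (Fm_eq_zero_of_Th g γ w _ hTa) (Fm_eq_zero_of_Th g γ w _ hTz)
    exact ⟨ms, by simpa [Function.comp] using haz ▸ haconv⟩
  constructor
  · -- case (i)
    intro hL
    have hcob : IsCoboundedUnder (· ≤ ·) atTop tseq :=
      (isBoundedUnder_of ⟨0, fun j => (ht_pos j).le⟩ :
        IsBoundedUnder (· ≥ ·) atTop tseq).isCoboundedUnder_le
    have hfreq : ∃ᶠ j in atTop, limsup tseq atTop / 2 < tseq j :=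
      frequently_lt_of_lt_limsup hcob (by linarith)
    obtain ⟨φ, hφ, hφt⟩ := extraction_of_frequently_atTop hfreq
    have hineq : ∀ j, Th g γ w (useq (φ j + 1))
        ≤ (1 - σ * limsup tseq atTop) * Th g γ w (useq (φ j)) := by
      intro j
      have h1 := hdecr (φ j)
      have h2 := hφt j
      have hx : 0 ≤ σ*Th g γ w (useq (φ j))*(2*tseq (φ j) - limsup tseq atTop) :=
        mul_nonneg (mul_nonneg hσ0.le (hTnn _)) (by linarith)
      nlinarith [hx]
    have hc1 : Tendsto (fun j => Th g γ w (useq (φ j + 1))) atTop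
        (𝓝 (⨅ j, Th g γ w (useq j))) :=
      hΘinf.comp (tendsto_atTop_mono (fun j => Nat.le_succ (φ j)) hφ.tendsto_atTop)
    have hc2 : Tendsto (fun j => (1 - σ * limsup tseq atTop) * Th g γ w (useq (φ j))) atTop
        (𝓝 ((1 - σ * limsup tseq atTop) * ⨅ j, Th g γ w (useq j))) :=
      (hΘinf.comp hφ.tendsto_atTop).const_mul _
    have hle := le_of_tendsto_of_tendsto' hc1 hc2 hineq
    have hinf_le : (⨅ j, Th g γ w (useq j)) ≤ 0 := by
      by_contra hpos'
      push_neg at hpos'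
      nlinarith [mul_pos (mul_pos hσ0 hL) hpos']
    have hzero : (⨅ j, Th g γ w (useq j)) = 0 := le_antisymm hinf_le hθinf_nonneg
    exact hconverge (hzero ▸ hΘinf)
  · -- case (ii)
    rintro hL ustar DTh ⟨φ, hφ, hφconv⟩ hDTh hstrict
    have hbdd_above : IsBoundedUnder (· ≤ ·) atTop tseq := isBoundedUnder_of ⟨1, ht_le1⟩
    have hbdd_below : IsBoundedUnder (· ≥ ·) atTop tseq :=
      isBoundedUnder_of ⟨0, fun j => (ht_pos j).le⟩
    have hliminf : (0:ℝ) ≤ liminf tseq atTop :=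
      le_liminf_of_le hbdd_above.isCoboundedUnder_ge
        (Eventually.of_forall fun j => (ht_pos j).le)
    have htz : Tendsto tseq atTop (𝓝 0) :=
      tendsto_of_le_liminf_of_limsup_le hliminf (le_of_eq hL) hbdd_above hbdd_below
    -- homogeneity of DTh
    have hhom : ∀ s : ℝ, 0 < s → ∀ e : Euc n, DTh (s • e) = s * DTh e := by
      intro s hs e
      have h1 := hDTh (s • e)
      have hmap : Tendsto (fun t : ℝ => t * s) (𝓝[>] (0:ℝ)) (𝓝[>] (0:ℝ)) := by
        apply tendsto_nhdsWithin_of_tendsto_nhds_of_eventually_within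
        · have h2 : Tendsto (fun t : ℝ => t * s) (𝓝 0) (𝓝 (0 * s)) :=
            (continuous_id.mul continuous_const).tendsto 0
          rw [zero_mul] at h2
          exact h2.mono_left nhdsWithin_le_nhds
        · filter_upwards [self_mem_nhdsWithin] with t (ht : 0 < t)
          exact mul_pos ht hs
      have h2 := ((hDTh e).comp hmap).const_mul s
      have h4 : Tendsto (fun t : ℝ => (Th g γ w (ustar + t • (s • e)) - Th g γ w ustar) / t)
          (𝓝[>] 0) (𝓝 (s * DTh e)) := by
        refine h2.congr' ?_
        filter_upwards [self_mem_nhdsWithin] with t (ht : 0 < t)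
        simp only [Function.comp]
        rw [smul_smul]
        rw [mul_comm t s]
        field_simp
      exact tendsto_nhds_unique h1 h4
    -- uniform bound on directions
    obtain ⟨R, hR⟩ := hcpt.isBounded.exists_norm_le
    have hR0 : 0 ≤ R := le_trans (norm_nonneg _) (hR _ (hK 0))
    obtain ⟨Lip, hLip⟩ := hg.lipHess
    set N0 : ℝ := (Lip : ℝ) * (2*R) + ‖fderiv ℝ (gradient g) (useq 0)‖ with hN0def
    have hN : ∀ j, ‖fderiv ℝ (gradient g) (useq j)‖ ≤ N0 := by
      intro j
      have h1 := hLip.dist_le_mul (useq j) (useq 0)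
      have h2 : dist (useq j) (useq 0) ≤ 2*R := by
        rw [dist_eq_norm]
        calc ‖useq j - useq 0‖ ≤ ‖useq j‖ + ‖useq 0‖ := norm_sub_le _ _
          _ ≤ 2*R := by linarith [hR _ (hK j), hR _ (hK 0)]
      have h3 : ‖fderiv ℝ (gradient g) (useq j)‖ - ‖fderiv ℝ (gradient g) (useq 0)‖
          ≤ dist (fderiv ℝ (gradient g) (useq j)) (fderiv ℝ (gradient g) (useq 0)) := by
        rw [dist_eq_norm]
        exact norm_sub_norm_le _ _
      have h4 : (Lip : ℝ) * dist (useq j) (useq 0) ≤ (Lip : ℝ) * (2*R) :=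
        mul_le_mul_of_nonneg_left h2 Lip.coe_nonneg
      rw [hN0def]
      linarith
    have hFb : ∀ j, ‖Fm g γ w (useq j)‖ ≤ Real.sqrt (Th g γ w (useq 0)) := by
      intro j
      have h1 : ‖Fm g γ w (useq j)‖ = Real.sqrt (Th g γ w (useq j)) := by
        rw [Th, Real.sqrt_sq (norm_nonneg _)]
      rw [h1]
      exact Real.sqrt_le_sqrt (hlev j)
    set S0 := Real.sqrt (Th g γ w (useq 0)) with hS0def
    have hS0 : 0 ≤ S0 := Real.sqrt_nonneg _
    set C : ℝ := max 1 ((S0 + γ*R*N0 + R*S0) / (γ*c₁)) with hCdef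
    have hC1 : (1:ℝ) ≤ C := le_max_left _ _
    have hN00 : 0 ≤ N0 := le_trans (norm_nonneg _) (hN 0)
    have hCd : ∀ j, ‖dseq j‖ ≤ C := by
      intro j
      have hb := dir_bound hg hγ hw (hdir j)
      have hu := hR _ (hK j)
      have hFj := hFb j
      have hNj := hN j
      have hd0 := norm_nonneg (dseq j)
      have hFnn := norm_nonneg (Fm g γ w (useq j))
      have hunn := norm_nonneg (useq j)
      have hNnn := norm_nonneg (fderiv ℝ (gradient g) (useq j))
      have hquad : γ*c₁*‖dseq j‖^2 ≤ (S0 + γ*R*N0)*‖dseq j‖ + R*S0 := by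
        have e1 : ‖Fm g γ w (useq j)‖*‖dseq j‖ ≤ S0*‖dseq j‖ :=
          mul_le_mul_of_nonneg_right hFj hd0
        have e2 : ‖useq j‖*‖fderiv ℝ (gradient g) (useq j)‖ ≤ R*N0 :=
          mul_le_mul hu hNj hNnn hR0
        have e3 : ‖useq j‖*‖Fm g γ w (useq j)‖ ≤ R*S0 := mul_le_mul hu hFj hFnn hR0
        have e4 : γ*(‖useq j‖*‖fderiv ℝ (gradient g) (useq j)‖)*‖dseq j‖
            ≤ γ*(R*N0)*‖dseq j‖ := by
          apply mul_le_mul_of_nonneg_right _ hd0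
          exact mul_le_mul_of_nonneg_left e2 hγ.le
        nlinarith [hb, e1, e3, e4]
      rcases le_total ‖dseq j‖ 1 with h | h
      · exact le_trans h hC1
      · have hdpos : (0:ℝ) < ‖dseq j‖ := by linarith
        have h2 : γ*c₁*‖dseq j‖ ≤ S0 + γ*R*N0 + R*S0 := by
          rw [← mul_le_mul_iff_of_pos_right hdpos]
          have e5 : R*S0 ≤ R*S0*‖dseq j‖ := by nlinarith [mul_nonneg hR0 hS0]
          nlinarith [hquad]
        have h3 : ‖dseq j‖ ≤ (S0 + γ*R*N0 + R*S0)/(γ*c₁) := by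
          rw [le_div_iff₀ (mul_pos hγ hg.c1_pos)]
          linarith
        exact le_trans h3 (le_max_right _ _)
    have hC0 : (0:ℝ) < C := lt_of_lt_of_le one_pos hC1
    -- the key estimate
    have key : ∀ ε : ℝ, 0 < ε → 2*(1-σ)*Th g γ w ustar ≤ ε*(1+2*C) := by
      intro ε hε
      rw [Metric.tendsto_nhdsWithin_nhds] at hstrict
      obtain ⟨δ, hδ0, hδ⟩ := hstrict ε hε
      have hev1 : ∀ᶠ j in atTop, dist (useq (φ j)) ustar < δ/2 :=
        Metric.tendsto_nhds.mp hφconv (δ/2) (by positivity)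
      have htφ : Tendsto (fun j => tseq (φ j)) atTop (𝓝 0) := htz.comp hφ.tendsto_atTop
      have hev2 : ∀ᶠ j in atTop, tseq (φ j) * (C+1) < β * (δ/2) := by
        have h1 : Tendsto (fun j => tseq (φ j) * (C+1)) atTop (𝓝 0) := by
          simpa using htφ.mul_const (C+1)
        exact h1.eventually_lt_const (by positivity)
      have hev3 : ∀ᶠ j in atTop, tseq (φ j) < 1 := htφ.eventually_lt_const one_pos
      have hev : ∀ᶠ j in atTop, 2*(1-σ)*Th g γ w (useq (φ j)) ≤ ε*(1+2*C) := by
        filter_upwards [hev1, hev2, hev3] with j h1 h2 h3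
        obtain ⟨l, hl, harmj, hminj⟩ := harm (φ j)
        have hl1 : 1 ≤ l := by
          rcases Nat.eq_zero_or_pos l with h0 | h0
          · exfalso; rw [h0, pow_zero] at hl; rw [hl] at h3; linarith
          · exact h0
        set v := useq (φ j) with hv
        set e := dseq (φ j) with he
        set s : ℝ := β^(l-1) with hs
        have hs0 : 0 < s := pow_pos hβ0 _
        have hsβ : s * β = tseq (φ j) := by
          rw [hs, hl, ← pow_succ, Nat.sub_add_cancel hl1]
        have hsC : s * (C+1) < δ/2 := by
          have h4 : s * (C+1) * β < (δ/2) * β := by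
            calc s * (C+1) * β = tseq (φ j) * (C+1) := by rw [← hsβ]; ring
              _ < β * (δ/2) := h2
              _ = (δ/2) * β := by ring
          exact lt_of_mul_lt_mul_right h4 hβ0.le
        have hsCd : s * ‖e‖ < δ/2 := by
          have h5 : s * ‖e‖ ≤ s * C := mul_le_mul_of_nonneg_left (hCd (φ j)) hs0.le
          nlinarith [hsC, hs0]
        have he0 : e ≠ 0 := by
          intro hez
          have hFz : Fm g γ w v = 0 := Fm_zero_of_dir_zero hγ hw (hez ▸ hdir (φ j))
          have hTv : Th g γ w v = 0 := by rw [Th, hFz]; simp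
          exact absurd hTv (ne_of_gt (hpos (φ j)))
        -- strict-differentiability estimate
        have hstrict_est : ∀ t' : ℝ, 0 < t' → t' * ‖e‖ < δ/2 →
            |Th g γ w (v + t' • e) - Th g γ w v - t' * DTh e| ≤ ε * (t' * ‖e‖) := by
          intro t' ht'0 ht'C
          have hne' : v + t' • e ≠ v := by
            intro hc
            apply he0
            have h5 : t' • e = (0 : Euc n) := by
              have h6 := congrArg (fun x => x - v) hc
              simpa using h6
            rcases smul_eq_zero.mp h5 with h6 | h6
            · exact absurd h6 (ne_of_gt ht'0)
            · exact h6
          have hdv : dist (v + t' • e) v = t' * ‖e‖ := by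
            rw [dist_eq_norm, add_sub_cancel_left, norm_smul, Real.norm_eq_abs,
              abs_of_pos ht'0]
          have hdist : dist ((v + t' • e, v) : Euc n × Euc n) (ustar, ustar) < δ := by
            rw [Prod.dist_eq]
            apply max_lt
            · calc dist (v + t' • e) ustar ≤ dist (v + t' • e) v + dist v ustar :=
                dist_triangle _ _ _
                _ < δ := by rw [hdv]; linarith
            · simpa using lt_trans h1 (by linarith)
          have hmem : ((v + t' • e, v) : Euc n × Euc n) ∈ {p : Euc n × Euc n | p.1 ≠ p.2} := hne'
          have happ := hδ hmem hdist
          rw [Real.dist_eq, sub_zero] at happ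
          have hsub : (v + t' • e) - v = t' • e := add_sub_cancel_left v _
          rw [hsub] at happ
          have hnorm : ‖t' • e‖ = t' * ‖e‖ := by
            rw [norm_smul, Real.norm_eq_abs, abs_of_pos ht'0]
          have hnpos : 0 < t' * ‖e‖ := mul_pos ht'0 (norm_pos_iff.mpr he0)
          rw [hnorm, abs_div, abs_of_pos hnpos] at happ
          have h7 := (div_lt_iff₀ hnpos).mp happ
          rw [hhom t' ht'0 e] at h7
          exact le_of_lt h7
        -- lower bound from failed Armijo step
        have hfail := hminj (l-1) (by omega)
        push_neg at hfail
        rw [← hs] at hfail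
        have hlow : -(2*σ)*Th g γ w v ≤ DTh e + ε*C := by
          have hest := hstrict_est s hs0 hsCd
          have h6 : Th g γ w (v + s • e) - Th g γ w v ≤ s*DTh e + ε*(s*‖e‖) := by
            have h7 := abs_le.mp hest
            linarith [h7.2]
          have h7 : (1 - 2*σ*s)*Th g γ w v < Th g γ w (v + s • e) := hfail
          have h8 : ε*(s*‖e‖) ≤ ε*(s*C) := by
            apply mul_le_mul_of_nonneg_left _ hε.le
            exact mul_le_mul_of_nonneg_left (hCd (φ j)) hs0.le
          have h9 : -(2*σ)*Th g γ w v * s < (DTh e + ε*C)*s := by nlinarith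
          exact le_of_lt ((mul_lt_mul_iff_of_pos_right hs0).mp h9)
        -- upper bound from descent property
        have hdesc := descent hg hγ hw (hdir (φ j))
        have hev_q : ∀ᶠ t' in 𝓝[>] (0:ℝ),
            (Th g γ w (v + t' • e) - Th g γ w v)/t' < -2*Th g γ w v + ε := by
          apply hdesc.eventually_lt_const
          linarith
        have hev_s : ∀ᶠ t' in 𝓝[>] (0:ℝ), t' * ‖e‖ < δ/2 := by
          have hq1 : Tendsto (fun t' : ℝ => t' * ‖e‖) (𝓝[>] 0) (𝓝 0) := by
            have hq2 : Tendsto (fun t' : ℝ => t' * ‖e‖) (𝓝 0) (𝓝 (0 * ‖e‖)) :=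
              (continuous_id.mul continuous_const).tendsto 0
            rw [zero_mul] at hq2
            exact hq2.mono_left nhdsWithin_le_nhds
          exact hq1.eventually_lt_const (by positivity)
        have hev_p : ∀ᶠ t' in 𝓝[>] (0:ℝ), 0 < t' := self_mem_nhdsWithin
        obtain ⟨t', ⟨hq', hs'⟩, hp'⟩ := ((hev_q.and hev_s).and hev_p).exists
        have hest' := hstrict_est t' hp' hs'
        have hup : DTh e ≤ -2*Th g γ w v + ε + ε*C := by
          have h6 : t'*DTh e ≤ Th g γ w (v + t' • e) - Th g γ w v + ε*(t'*‖e‖) := by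
            have h7 := abs_le.mp hest'
            linarith [h7.1]
          have h7 : Th g γ w (v + t' • e) - Th g γ w v < (-2*Th g γ w v + ε)*t' := by
            have h8 := (div_lt_iff₀ hp').mp hq'
            linarith
          have h8 : ε*(t'*‖e‖) ≤ ε*(t'*C) := by
            apply mul_le_mul_of_nonneg_left _ hε.le
            exact mul_le_mul_of_nonneg_left (hCd (φ j)) hp'.le
          have h9 : DTh e * t' ≤ (-2*Th g γ w v + ε + ε*C)*t' := by nlinarith
          exact le_of_mul_le_mul_right h9 hp'
        linarith [hlow, hup, hTnn v]
      have hlim : Tendsto (fun j => 2*(1-σ)*Th g γ w (useq (φ j))) atTop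
          (𝓝 (2*(1-σ)*Th g γ w ustar)) :=
        (((Th_continuous hg hγ hw).continuousAt.tendsto).comp hφconv).const_mul _
      exact le_of_tendsto hlim hev
    have hT0 : Th g γ w ustar ≤ 0 := by
      by_contra hTc
      push_neg at hTc
      have hCpos : (0:ℝ) < 1 + 2*C := by linarith
      have hσ' : (0:ℝ) < 1 - σ := by linarith
      have hεpos : 0 < (1-σ)*Th g γ w ustar/(1+2*C) :=
        div_pos (mul_pos hσ' hTc) hCpos
      have hkey := key _ hεpos
      rw [div_mul_cancel₀ _ (ne_of_gt hCpos)] at hkey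
      nlinarith [mul_pos hσ' hTc]
    have hTustar : Th g γ w ustar = 0 := le_antisymm hT0 (hTnn ustar)
    have hθφ0 : Tendsto (fun j => Th g γ w (useq (φ j))) atTop (𝓝 0) := by
      have h1 := ((Th_continuous hg hγ hw).continuousAt.tendsto).comp hφconv
      rwa [hTustar] at h1
    have hinf0 : (⨅ j, Th g γ w (useq j)) = 0 :=
      tendsto_nhds_unique (hΘinf.comp hφ.tendsto_atTop) hθφ0
    obtain ⟨z, hz1, hz2⟩ := hconverge (hinf0 ▸ hΘinf)
    have hzu : ustar = z := zero_unique hg hγ hw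
      (Fm_eq_zero_of_Th g γ w _ hTustar) (Fm_eq_zero_of_Th g γ w _ hz2)
    exact ⟨hzu ▸ hz1, hTustar⟩
end
end

section
/- Suppose u* ∈ ℝⁿ satisfies F(u*) = 0 and I⁺(u*) ∪ I⁻(u*) = ∅. Then there exists a neighborhood U of u* such that for every u ∈ U the subsets A⁺₊(u), A⁻₋(u), I°₊(u), I°₋(u) are empty; in particular, the modified index sets coincide with the original index sets for all u ∈ U. -/
open scoped RealInnerProductSpace
open Filter Topology

noncomputable section

variable {n : ℕ}

/-- near a zero `u*` of `F` with `I⁺(u*) ∪ I⁻(u*) = ∅`, the extra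
subsets are empty, so the modified index sets coincide with the original ones. -/
theorem stmt16 {n : ℕ} (hn : 1 ≤ n) (c₁ c₂ : ℝ) (g : Euc n → ℝ) (hg : Assump n g c₁ c₂)
    (w : Fin n → ℝ) (hw : ∀ k, 0 < w k) (γ : ℝ) (hγ : 0 < γ)
    (ustar : Euc n) (hz : Fm g γ w ustar = 0)
    (hs : Ipl g γ w ustar ∪ Imi g γ w ustar = ∅) :
    ∃ U ∈ 𝓝 ustar, ∀ u ∈ U,
      App g γ w u = ∅ ∧ Amm g γ w u = ∅ ∧ Izp g γ w u = ∅ ∧ Izm g γ w u = ∅ ∧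
      ApBar g γ w u = Ap g γ w u ∧ AmBar g γ w u = Am g γ w u ∧
      IzBar g γ w u = Iz g γ w u ∧ IplBar g γ w u = Ipl g γ w u ∧
      ImiBar g γ w u = Imi g γ w u := by
  
  classical
  -- continuity of the gradient
  have hgradcont : Continuous (fun u : Euc n => gradient g u) := by
    have h1 : Continuous (fun u : Euc n => fderiv ℝ g u) :=
      hg.contDiff.continuous_fderiv (by norm_num)
    unfold gradient
    exact (InnerProductSpace.toDual ℝ (Euc n)).symm.continuous.comp h1
  have hck : ∀ k : Fin n, Continuous (fun u : Euc n => gradient g u k) := fun k =>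
    ((EuclideanSpace.proj (𝕜 := ℝ) k).continuous.comp hgradcont)
  have hek : ∀ k : Fin n, Continuous (fun u : Euc n => u k) := fun k =>
    (EuclideanSpace.proj (𝕜 := ℝ) k).continuous
  -- the good open condition for each coordinate
  set P : Fin n → Euc n → Prop := fun k u =>
    (γ * gradient g u k + γ * w k < u k ∧ 0 < u k) ∨
    (u k < γ * gradient g u k - γ * w k ∧ u k < 0) ∨
    (γ * gradient g u k - γ * w k < 0 ∧ 0 < γ * gradient g u k + γ * w k) with hP
  have hzk : ∀ k : Fin n, (ustar k : ℝ) - soft γ w (ustar - γ • gradient g ustar) k = 0 := by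
    intro k
    have := congrArg (fun v : Euc n => v k) hz
    simpa [Fm] using this
  have hns : ∀ k : Fin n, ustar k ≠ γ * gradient g ustar k + γ * w k ∧
      ustar k ≠ γ * gradient g ustar k - γ * w k := by
    intro k
    have h1 : k ∉ Ipl g γ w ustar ∪ Imi g γ w ustar := by rw [hs]; exact Set.notMem_empty k
    simp only [Set.mem_union, Ipl, Imi, Set.mem_setOf_eq] at h1
    push_neg at h1
    exact h1
  -- P holds at ustar
  have hPstar : ∀ k : Fin n, P k ustar := by
    intro k
    have hsoft : soft γ w (ustar - γ • gradient g ustar) k =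
        Real.sign (ustar k - γ * gradient g ustar k) *
          max (|ustar k - γ * gradient g ustar k| - γ * w k) 0 := by
      simp [soft]
    rcases lt_trichotomy (ustar k) (γ * gradient g ustar k - γ * w k) with hlt | heq | hgt
    · -- A⁻ case
      have hvneg : ustar k - γ * gradient g ustar k < -(γ * w k) := by linarith
      have hv0 : ustar k - γ * gradient g ustar k < 0 := by nlinarith [mul_pos hγ (hw k)]
      have : ustar k - (ustar k - γ * gradient g ustar k + γ * w k) = 0 := by
        have h0 := hzk k
        rw [hsoft, Real.sign_of_neg hv0] at h0
        rw [abs_of_neg hv0] at h0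
        have hmax : max (-(ustar k - γ * gradient g ustar k) - γ * w k) 0 =
            -(ustar k - γ * gradient g ustar k) - γ * w k := by
          apply max_eq_left; linarith
        rw [hmax] at h0
        linarith
      have hgw : γ * gradient g ustar k - γ * w k = 0 := by linarith
      right; left
      constructor
      · linarith
      · linarith
    · exact absurd heq (hns k).2
    · rcases lt_trichotomy (ustar k) (γ * gradient g ustar k + γ * w k) with hlt2 | heq2 | hgt2
      · -- I° case
        have habs : |ustar k - γ * gradient g ustar k| < γ * w k := by
          rw [abs_lt]; constructor <;> linarith
        have h0 := hzk k
        rw [hsoft] at h0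
        have hmax : max (|ustar k - γ * gradient g ustar k| - γ * w k) 0 = 0 := by
          apply max_eq_right; linarith
        rw [hmax, mul_zero, sub_zero] at h0
        right; right
        constructor
        · rw [h0] at hgt; linarith
        · rw [h0] at hlt2; linarith
      · exact absurd heq2 (hns k).1
      · -- A⁺ case
        have hvpos : 0 < ustar k - γ * gradient g ustar k := by
          nlinarith [mul_pos hγ (hw k)]
        have h0 := hzk k
        rw [hsoft, Real.sign_of_pos hvpos, abs_of_pos hvpos] at h0
        have hmax : max (ustar k - γ * gradient g ustar k - γ * w k) 0 =
            ustar k - γ * gradient g ustar k - γ * w k := by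
          apply max_eq_left; linarith
        rw [hmax, one_mul] at h0
        have hgw : γ * gradient g ustar k + γ * w k = 0 := by linarith
        left
        constructor
        · linarith
        · linarith
  -- P is an eventually-true (open) condition
  have hPev : ∀ k : Fin n, ∀ᶠ u in 𝓝 ustar, P k u := by
    intro k
    rcases hPstar k with ⟨h1, h2⟩ | ⟨h1, h2⟩ | ⟨h1, h2⟩
    · have e1 : ∀ᶠ u in 𝓝 ustar, γ * gradient g u k + γ * w k < u k :=
        (((continuous_const.mul (hck k)).add continuous_const).continuousAt).eventually_lt
          ((hek k).continuousAt) h1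
      have e2 : ∀ᶠ u in 𝓝 ustar, (0:ℝ) < u k :=
        continuousAt_const.eventually_lt ((hek k).continuousAt) h2
      filter_upwards [e1, e2] with u h1 h2
      exact Or.inl ⟨h1, h2⟩
    · have e1 : ∀ᶠ u in 𝓝 ustar, u k < γ * gradient g u k - γ * w k :=
        ((hek k).continuousAt).eventually_lt
          (((continuous_const.mul (hck k)).sub continuous_const).continuousAt) h1
      have e2 : ∀ᶠ u in 𝓝 ustar, u k < (0:ℝ) :=
        ((hek k).continuousAt).eventually_lt continuousAt_const h2
      filter_upwards [e1, e2] with u h1 h2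
      exact Or.inr (Or.inl ⟨h1, h2⟩)
    · have e1 : ∀ᶠ u in 𝓝 ustar, γ * gradient g u k - γ * w k < 0 :=
        (((continuous_const.mul (hck k)).sub continuous_const).continuousAt).eventually_lt
          continuousAt_const h1
      have e2 : ∀ᶠ u in 𝓝 ustar, (0:ℝ) < γ * gradient g u k + γ * w k :=
        continuousAt_const.eventually_lt
          (((continuous_const.mul (hck k)).add continuous_const).continuousAt) h2
      filter_upwards [e1, e2] with u h1 h2
      exact Or.inr (Or.inr ⟨h1, h2⟩)
  have hall : ∀ᶠ u in 𝓝 ustar, ∀ k, P k u := eventually_all.2 hPev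
  refine ⟨{u | ∀ k, P k u}, hall, ?_⟩
  intro u hu
  have hApp : App g γ w u = ∅ := by
    ext k
    simp only [App, Set.mem_setOf_eq, Set.mem_empty_iff_false, iff_false, not_and]
    have hγw : 0 < γ * w k := mul_pos hγ (hw k)
    intro h1
    rcases hu k with ⟨g1, g2⟩ | ⟨g1, g2⟩ | ⟨g1, g2⟩ <;> intro h2 <;> linarith
  have hAmm : Amm g γ w u = ∅ := by
    ext k
    simp only [Amm, Set.mem_setOf_eq, Set.mem_empty_iff_false, iff_false, not_and]
    have hγw : 0 < γ * w k := mul_pos hγ (hw k)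
    intro h1
    rcases hu k with ⟨g1, g2⟩ | ⟨g1, g2⟩ | ⟨g1, g2⟩ <;> intro h2 <;> linarith
  have hIzp : Izp g γ w u = ∅ := by
    ext k
    simp only [Izp, Set.mem_setOf_eq, Set.mem_empty_iff_false, iff_false, not_and]
    have hγw : 0 < γ * w k := mul_pos hγ (hw k)
    intro h1 h2
    rcases hu k with ⟨g1, g2⟩ | ⟨g1, g2⟩ | ⟨g1, g2⟩ <;> intro h3 <;> linarith
  have hIzm : Izm g γ w u = ∅ := by
    ext k
    simp only [Izm, Set.mem_setOf_eq, Set.mem_empty_iff_false, iff_false, not_and]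
    have hγw : 0 < γ * w k := mul_pos hγ (hw k)
    intro h1 h2
    rcases hu k with ⟨g1, g2⟩ | ⟨g1, g2⟩ | ⟨g1, g2⟩ <;> intro h3 <;> linarith
  refine ⟨hApp, hAmm, hIzp, hIzm, ?_, ?_, ?_, ?_, ?_⟩
  · rw [ApBar, hApp, Set.diff_empty]
  · rw [AmBar, hAmm, Set.diff_empty]
  · rw [IzBar, hIzp, hIzm, Set.empty_union, Set.diff_empty]
  · rw [IplBar, hApp, hIzp, Set.union_empty, Set.union_empty]
  · rw [ImiBar, hAmm, hIzm, Set.union_empty, Set.union_empty]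
end
end
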